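/- arXiv:1006.0092 — 5 statements merged into one kernel-verified Lean document; each statement's English description precedes it below -/
import Mathlib

section
/- If A is an integral ring extension of a commutative ring B, then W_n(A) is integral over W_n(B) (p-typical Witt vectors). -/
open WittVector Polynomial

namespace WittAux

variable {p : ℕ} [hp : Fact p.Prime]

theorem ghostComponent_eq_zero_of_coeff {R : Type*} [CommRing R] {x : WittVector p R} {i : ℕ}
    (h : ∀ j ≤ i, x.coeff j = 0) : WittVector.ghostComponent i x = 0 := by
  rw [WittVector.ghostComponent_apply, aeval_wittPolynomial]
  refine Finset.sum_eq_zero fun k hk => ?_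
  rw [Finset.mem_range] at hk
  rw [h k (Nat.lt_succ_iff.mp hk), zero_pow (pow_ne_zero _ hp.out.ne_zero), mul_zero]

theorem ghostComponent_zero' {R : Type*} [CommRing R] (x : WittVector p R) :
    WittVector.ghostComponent 0 x = x.coeff 0 := by
  simp [WittVector.ghostComponent_apply, aeval_wittPolynomial]

theorem ghostComponent_map {R S : Type*} [CommRing R] [CommRing S] (g : R →+* S)
    (x : WittVector p R) (i : ℕ) :
    WittVector.ghostComponent i (WittVector.map g x) = g (WittVector.ghostComponent i x) := by
  simp only [WittVector.ghostComponent_apply, aeval_wittPolynomial, map_sum, map_mul, map_pow,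
    WittVector.map_coeff, map_natCast]

/-- The "ghost map" on truncated Witt vectors of length `n+1`. -/
noncomputable def tghost (R : Type*) [CommRing R] (n : ℕ) :
    TruncatedWittVector p (n + 1) R →+* (Fin (n + 1) → R) :=
  RingHom.liftOfRightInverse (WittVector.truncate (n + 1)) TruncatedWittVector.out
    (fun z => TruncatedWittVector.truncateFun_out z)
    ⟨Pi.ringHom fun i : Fin (n + 1) => WittVector.ghostComponent (i : ℕ), by
      intro x hx
      rw [RingHom.mem_ker]
      funext i
      exact ghostComponent_eq_zero_of_coeff fun j hj =>
        (WittVector.mem_ker_truncate _ _).mp hx j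
          (lt_of_le_of_lt hj (Nat.lt_succ_iff.mpr (Nat.lt_succ_iff.mp i.isLt)))⟩

theorem tghost_truncate {R : Type*} [CommRing R] (n : ℕ) (x : WittVector p R) (i : Fin (n + 1)) :
    tghost R n (WittVector.truncate (n + 1) x) i = WittVector.ghostComponent (i : ℕ) x := by
  have := RingHom.liftOfRightInverse_comp_apply (WittVector.truncate (n + 1))
    TruncatedWittVector.out (fun z => TruncatedWittVector.truncateFun_out z)
    ⟨Pi.ringHom fun i : Fin (n + 1) => WittVector.ghostComponent (i : ℕ), by
      intro x hx
      rw [RingHom.mem_ker]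
      funext i
      exact ghostComponent_eq_zero_of_coeff fun j hj =>
        (WittVector.mem_ker_truncate _ _).mp hx j
          (lt_of_le_of_lt hj (Nat.lt_succ_iff.mpr (Nat.lt_succ_iff.mp i.isLt)))⟩ x
  exact congrFun this i

theorem verschiebung_pow {R : Type*} [CommRing R] (u : WittVector p R) (k : ℕ) :
    (WittVector.verschiebung u) ^ (k + 1) =
      WittVector.verschiebung (u ^ (k + 1) * (p : WittVector p R) ^ k) := by
  induction k with
  | zero => simp
  | succ k ih =>
    rw [pow_succ, ih, ← WittVector.verschiebung_mul_frobenius,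
      WittVector.frobenius_verschiebung]
    congr 1
    ring

theorem pow_coeff_eq_zero {R : Type*} [CommRing R] (m : ℕ) (x : WittVector p R)
    (hx : ∀ i ≤ m, WittVector.ghostComponent i x = 0) :
    ∀ i ≤ m, (x ^ 2 ^ m).coeff i = 0 := by
  induction m generalizing x with
  | zero =>
    intro i hi
    interval_cases i
    rw [pow_zero, pow_one, ← ghostComponent_zero']
    exact hx 0 le_rfl
  | succ m ih =>
    -- x has zeroth coefficient zero, so it is a Verschiebung
    have hx0 : x.coeff 0 = 0 := by rw [← ghostComponent_zero']; exact hx 0 (Nat.zero_le _)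
    set y : WittVector p R := WittVector.mk p fun k => x.coeff (k + 1) with hy
    have hxy : WittVector.verschiebung y = x := by
      ext k
      cases k with
      | zero => rw [WittVector.verschiebung_coeff_zero, hx0]
      | succ k => rw [WittVector.verschiebung_coeff_succ]; simp [hy, WittVector.coeff_mk]
    have hpy : ∀ i ≤ m, (p : R) * WittVector.ghostComponent i y = 0 := by
      intro i hi
      rw [← WittVector.ghostComponent_verschiebung, hxy]
      exact hx (i + 1) (Nat.succ_le_succ hi)
    set u : WittVector p R := y * (y * (p : WittVector p R)) with hu
    have hghu : ∀ i ≤ m, WittVector.ghostComponent i u = 0 := by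
      intro i hi
      have : WittVector.ghostComponent i u =
          ((p : R) * WittVector.ghostComponent i y) * WittVector.ghostComponent i y := by
        simp only [hu, map_mul, map_natCast]
        ring
      rw [this, hpy i hi, zero_mul]
    have hucoeff := ih u hghu
    have hx2 : x ^ 2 = WittVector.verschiebung u := by
      rw [← hxy, sq, ← WittVector.verschiebung_mul_frobenius,
        WittVector.frobenius_verschiebung, hu]
    obtain ⟨k, hk⟩ : ∃ k, 2 ^ m = k + 1 :=
      ⟨2 ^ m - 1, (Nat.succ_pred_eq_of_pos (pow_pos (by norm_num) m)).symm⟩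
    have hpow : x ^ 2 ^ (m + 1) =
        WittVector.verschiebung (u ^ 2 ^ m * (p : WittVector p R) ^ k) := by
      rw [pow_succ, pow_mul', hx2, hk, verschiebung_pow]
    intro i hi
    rw [hpow]
    cases i with
    | zero => exact WittVector.verschiebung_coeff_zero _
    | succ i =>
      rw [WittVector.verschiebung_coeff_succ]
      have hmem : u ^ 2 ^ m * (p : WittVector p R) ^ k ∈
          RingHom.ker (WittVector.truncate (p := p) (m + 1)) := by
        apply Ideal.mul_mem_right
        rw [WittVector.mem_ker_truncate]
        intro j hj
        exact hucoeff j (Nat.lt_succ_iff.mp hj)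
      rw [WittVector.mem_ker_truncate] at hmem
      exact hmem i hi

theorem pow_eq_zero_of_tghost_eq_zero {R : Type*} [CommRing R] (n : ℕ)
    (z : TruncatedWittVector p (n + 1) R) (hz : tghost R n z = 0) : z ^ 2 ^ n = 0 := by
  have h1 : WittVector.truncate (n + 1) z.out = z := TruncatedWittVector.truncateFun_out z
  have h2 : ∀ i ≤ n, WittVector.ghostComponent i z.out = 0 := by
    intro i hi
    have := congrFun hz ⟨i, Nat.lt_succ_of_le hi⟩
    rw [← h1, tghost_truncate] at this
    exact this
  rw [← h1, ← map_pow]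
  have : z.out ^ 2 ^ n ∈ RingHom.ker (WittVector.truncate (p := p) (n + 1)) := by
    rw [WittVector.mem_ker_truncate]
    intro i hi
    exact pow_coeff_eq_zero n z.out h2 i (Nat.lt_succ_iff.mp hi)
  rwa [RingHom.mem_ker] at this

end WittAux

/-- If `A` is an integral ring extension of a commutative ring `B`, then
`W_n(A)` is integral over `W_n(B)` (`p`-typical Witt vectors, normalized indexing:
`W_n = TruncatedWittVector p (n+1)`). The functorial map `W_n(B) → W_n(A)` is characterized
via the truncation maps by `WittVector.map` of the structure map `B → A`. -/
theorem witt_of_integral_is_integral (p : ℕ) [Fact p.Prime] (n : ℕ)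
    (B A : Type) [CommRing B] [CommRing A] [Algebra B A] [Algebra.IsIntegral B A]
    (mapT : TruncatedWittVector p (n + 1) B →+* TruncatedWittVector p (n + 1) A)
    (hmap : ∀ x : WittVector p B, mapT (WittVector.truncate (n + 1) x) =
      WittVector.truncate (n + 1) (WittVector.map (algebraMap B A) x)) :
    mapT.IsIntegral := by
  intro x
  set gh := WittAux.tghost (p := p) A n with hgh
  set φ : TruncatedWittVector p (n + 1) B →+* (Fin (n + 1) → A) := gh.comp mapT with hφ
  -- every element of A is integral over the i-th ghost coordinate of φ
  have coord_int : ∀ (i : Fin (n + 1)) (a : A),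
      ((Pi.evalRingHom (fun _ => A) i).comp φ).IsIntegralElem a := by
    intro i a
    set ψ : TruncatedWittVector p (n + 1) B →+* A := (Pi.evalRingHom (fun _ => A) i).comp φ
      with hψ
    set ψB : TruncatedWittVector p (n + 1) B →+* B :=
      (Pi.evalRingHom (fun _ => B) i).comp (WittAux.tghost B n) with hψB
    have happly : ∀ w : WittVector p B,
        ψ (WittVector.truncate (n + 1) w) =
          algebraMap B A (WittVector.ghostComponent (i : ℕ) w) := by
      intro w
      have : ψ (WittVector.truncate (n + 1) w) =
          gh (WittVector.truncate (n + 1) (WittVector.map (algebraMap B A) w)) i := by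
        simp [hψ, hφ, hmap w]
      rw [this, hgh, WittAux.tghost_truncate, WittAux.ghostComponent_map]
    have hcomm : (algebraMap B A).comp ψB = ψ := by
      apply RingHom.ext
      intro c
      obtain ⟨w, rfl⟩ := WittVector.truncate_surjective p (n + 1) B c
      rw [RingHom.comp_apply, happly w, hψB]
      simp [WittAux.tghost_truncate]
    letI algT : Algebra (TruncatedWittVector p (n + 1) B) A := ψ.toAlgebra
    letI algB : Algebra (TruncatedWittVector p (n + 1) B) B := ψB.toAlgebra
    haveI : IsScalarTower (TruncatedWittVector p (n + 1) B) B A := by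
      apply IsScalarTower.of_algebraMap_eq'
      rw [RingHom.algebraMap_toAlgebra, RingHom.algebraMap_toAlgebra]
      exact hcomm.symm
    haveI : Algebra.IsIntegral (TruncatedWittVector p (n + 1) B) B := by
      constructor
      intro b
      refine ⟨X ^ p ^ (i : ℕ) -
        C (WittVector.truncate (n + 1) (WittVector.teichmuller p b)), ?_, ?_⟩
      · exact monic_X_pow_sub_C _ (pow_ne_zero _ (Fact.out : p.Prime).ne_zero)
      · rw [RingHom.algebraMap_toAlgebra]
        simp only [eval₂_sub, eval₂_X_pow, eval₂_C, hψB, RingHom.comp_apply,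
          Pi.evalRingHom_apply]
        rw [WittAux.tghost_truncate, WittVector.ghostComponent_teichmuller, sub_self]
    have hint : IsIntegral (TruncatedWittVector p (n + 1) B) a :=
      isIntegral_trans a (Algebra.IsIntegral.isIntegral (R := B) a)
    rwa [IsIntegral, RingHom.algebraMap_toAlgebra] at hint
  -- single-coordinate vectors are integral over φ
  have single_int : ∀ (i : Fin (n + 1)) (a : A), φ.IsIntegralElem (Pi.single i a) := by
    intro i a
    obtain ⟨q, hq, hq0⟩ := coord_int i a
    refine ⟨X * q, monic_X.mul hq, ?_⟩
    rw [eval₂_mul, eval₂_X]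
    funext k
    rw [Pi.mul_apply]
    by_cases hk : k = i
    · subst hk
      have := Polynomial.hom_eval₂ q φ (Pi.evalRingHom (fun _ => A) k) (Pi.single k a)
      have h2 : (eval₂ φ (Pi.single k a) q) k = 0 := by
        rw [show (eval₂ φ (Pi.single k a) q) k =
            (Pi.evalRingHom (fun _ => A) k) (eval₂ φ (Pi.single k a) q) from rfl, this,
          Pi.evalRingHom_apply, Pi.single_eq_same] at *
        exact hq0
      rw [h2, mul_zero]
      rfl
    · rw [Pi.single_eq_of_ne hk, zero_mul]
      rfl
  -- every element of the product ring is integral over φ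
  have key : ∀ v : Fin (n + 1) → A, φ.IsIntegralElem v := by
    letI : Algebra (TruncatedWittVector p (n + 1) B) (Fin (n + 1) → A) := φ.toAlgebra
    intro v
    have h1 : ∀ i : Fin (n + 1), IsIntegral (TruncatedWittVector p (n + 1) B)
        ((Pi.single i (v i) : Fin (n + 1) → A)) := by
      intro i
      have := single_int i (v i)
      rwa [IsIntegral, RingHom.algebraMap_toAlgebra]
    have h2 : IsIntegral (TruncatedWittVector p (n + 1) B) v := by
      rw [← Finset.univ_sum_single v]
      exact IsIntegral.sum _ fun i _ => h1 i
    rwa [IsIntegral, RingHom.algebraMap_toAlgebra] at h2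
  obtain ⟨q, hq, hq0⟩ := key (gh x)
  set z : TruncatedWittVector p (n + 1) A := eval₂ mapT x q with hz
  have hghz : gh z = 0 := by
    rw [hz, Polynomial.hom_eval₂ q mapT gh x, ← hφ]
    exact hq0
  have hznil : z ^ 2 ^ n = 0 := WittAux.pow_eq_zero_of_tghost_eq_zero n z hghz
  exact ⟨q ^ 2 ^ n, hq.pow _, by rw [eval₂_pow, ← hz, hznil]⟩
end

section
/- If A is a finite (module-finite) algebra over a discrete valuation ring R with p in the maximal ideal, then W_n(A) is a finite R-algebra. -/
open WittVector

section aux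

variable {p : ℕ} [Fact p.Prime] {A : Type} [CommRing A]

private lemma iterate_verschiebung_add (k : ℕ) (x y : WittVector p A) :
    verschiebung^[k] (x + y) = verschiebung^[k] x + verschiebung^[k] y := by
  induction k with
  | zero => rfl
  | succ k ih =>
      rw [Function.iterate_succ_apply', Function.iterate_succ_apply',
        Function.iterate_succ_apply', ih, map_add]

private lemma iterate_verschiebung_coeff_lt (k i : ℕ) (h : i < k) (x : WittVector p A) :
    (verschiebung^[k] x).coeff i = 0 := by
  induction k generalizing i with
  | zero => omega
  | succ k ih =>
      rw [Function.iterate_succ_apply']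
      rcases i with _ | i
      · exact verschiebung_coeff_zero _
      · rw [verschiebung_coeff_succ]
        exact ih i (by omega)

private lemma ghostComponent_zero_eq (x : WittVector p A) :
    ghostComponent 0 x = x.coeff 0 := by
  simp [ghostComponent_apply, wittPolynomial_zero]

private lemma ghostComponent_iterate_frobenius (k : ℕ) (x : WittVector p A) :
    ghostComponent 0 (frobenius^[k] x) = ghostComponent k x := by
  induction k generalizing x with
  | zero => rfl
  | succ k ih =>
      rw [Function.iterate_succ_apply, ih, ghostComponent_frobenius]

/-- The key auxiliary result, proven by induction on `n`. -/
private lemma aux (n : ℕ)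
    (R : Type) [CommRing R] [IsDomain R] [IsDiscreteValuationRing R]
    [Algebra R A] [Module.Finite R A]
    (φ : R →+* TruncatedWittVector p (n + 1) A)
    (hφ : ∀ r : R, ∃ w : WittVector p A, WittVector.truncate (n + 1) w = φ r ∧
      ∀ i : ℕ, i ≤ n → WittVector.ghostComponent i w = algebraMap R A r) :
    @Module.Finite R (TruncatedWittVector p (n + 1) A) _ _ φ.toModule := by
  induction n with
  | zero =>
      letI := φ.toModule
      -- The map `A → W₁(A)` sending `a` to the length-1 vector `(a)`.
      have smul_def : ∀ (r : R) (x : TruncatedWittVector p 1 A), r • x = φ r * x :=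
        fun _ _ => rfl
      let g : A → TruncatedWittVector p 1 A :=
        fun a => WittVector.truncate 1 (WittVector.mk p (fun i => if i = 0 then a else 0))
    -- coeff description of g
      have hg_coeff : ∀ (a : A) (i : Fin 1),
          (g a).coeff i = a := by
        intro a i
        have : i = (0 : Fin 1) := Subsingleton.elim _ _
        subst this
        simp [g, WittVector.coeff_truncate, WittVector.coeff_mk]
      have hg_add : ∀ a b : A, g (a + b) = g a + g b := by
        intro a b
        apply TruncatedWittVector.ext
        intro i
        have : (g a + g b : TruncatedWittVector p 1 A) =
            WittVector.truncate 1 ((WittVector.mk p (fun i => if i = 0 then a else 0)) +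
              (WittVector.mk p (fun i => if i = 0 then b else 0))) := by
          rw [map_add]
        rw [hg_coeff, this]
        have : i = (0 : Fin 1) := Subsingleton.elim _ _
        subst this
        rw [WittVector.coeff_truncate]
        show _ = (_ + _ : WittVector p A).coeff 0
        rw [WittVector.add_coeff_zero]
        simp [WittVector.coeff_mk]
      have hg_smul : ∀ (r : R) (a : A), g (r • a) = r • g a := by
        intro r a
        obtain ⟨w, hw, hghost⟩ := hφ r
        rw [smul_def, ← hw, ← map_mul]
        apply TruncatedWittVector.ext
        intro i
        have : i = (0 : Fin 1) := Subsingleton.elim _ _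
        subst this
        rw [hg_coeff, WittVector.coeff_truncate]
        show r • a = (_ * _ : WittVector p A).coeff 0
        rw [WittVector.mul_coeff_zero]
        have h0 := hghost 0 (le_refl 0)
        rw [ghostComponent_zero_eq] at h0
        rw [h0, WittVector.coeff_mk]
        simp [Algebra.smul_def]
      let L : A →ₗ[R] TruncatedWittVector p 1 A :=
        { toFun := g, map_add' := hg_add, map_smul' := fun r a => (hg_smul r a).symm ▸ rfl }
      have hsurj : Function.Surjective L := by
        intro x
        refine ⟨x.coeff 0, ?_⟩
        apply TruncatedWittVector.ext
        intro i
        have : i = (0 : Fin 1) := Subsingleton.elim _ _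
        subst this
        exact hg_coeff _ _
      exact Module.Finite.of_surjective L hsurj
  | succ n ih =>
      letI instM := φ.toModule
      have smul_def : ∀ (r : R) (x : TruncatedWittVector p (n + 2) A), r • x = φ r * x :=
        fun _ _ => rfl
      -- the truncation ring hom to the next lower level
      let ψ : TruncatedWittVector p (n + 2) A →+* TruncatedWittVector p (n + 1) A :=
        TruncatedWittVector.truncate (by omega)
      let φ' : R →+* TruncatedWittVector p (n + 1) A := ψ.comp φ
      letI instM' := φ'.toModule
      have smul_def' : ∀ (r : R) (x : TruncatedWittVector p (n + 1) A), r • x = φ' r * x :=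
        fun _ _ => rfl
      have hφ' : ∀ r : R, ∃ w : WittVector p A, WittVector.truncate (n + 1) w = φ' r ∧
          ∀ i : ℕ, i ≤ n → WittVector.ghostComponent i w = algebraMap R A r := by
        intro r
        obtain ⟨w, hw, hghost⟩ := hφ r
        refine ⟨w, ?_, fun i hi => hghost i (by omega)⟩
        show WittVector.truncate (n + 1) w = ψ (φ r)
        rw [← hw, TruncatedWittVector.truncate_wittVector_truncate]
      haveI hfin' := ih φ' hφ'
      -- truncation as an R-linear map
      let T : TruncatedWittVector p (n + 2) A →ₗ[R] TruncatedWittVector p (n + 1) A :=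
        { toFun := ψ,
          map_add' := map_add ψ,
          map_smul' := by
            intro r x
            show ψ (φ r * x) = φ' r * ψ x
            rw [map_mul]
            rfl }
      -- the map `A → W_{n+2}(A)`, `a ↦ V^{n+1} (a, 0, 0, ...)` (truncated)
      let g : A → TruncatedWittVector p (n + 2) A :=
        fun a => WittVector.truncate (n + 2)
          (verschiebung^[n + 1] (WittVector.mk p (fun i => if i = 0 then a else 0)))
      have hg_coeff : ∀ (a : A) (i : Fin (n + 2)),
          (g a).coeff i = if (i : ℕ) = n + 1 then a else 0 := by
        intro a i
        rw [WittVector.coeff_truncate]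
        show (verschiebung^[n + 1] _ : WittVector p A).coeff (i : ℕ) = _
        rcases eq_or_ne (i : ℕ) (n + 1) with h | h
        · rw [h, if_pos rfl]
          have := iterate_verschiebung_coeff
            (WittVector.mk p (fun i => if i = 0 then a else 0)) (n + 1) 0
          rw [zero_add] at this
          rw [this, WittVector.coeff_mk]
          simp
        · rw [if_neg h]
          have hi : (i : ℕ) < n + 1 := by omega
          exact iterate_verschiebung_coeff_lt _ _ hi _
      have hg_add : ∀ a b : A, g (a + b) = g a + g b := by
        intro a b
        show _ = WittVector.truncate (n + 2) _ + WittVector.truncate (n + 2) _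
        rw [← map_add, ← iterate_verschiebung_add]
        apply TruncatedWittVector.ext
        intro i
        rw [WittVector.coeff_truncate, WittVector.coeff_truncate]
        show (verschiebung^[n + 1] _ : WittVector p A).coeff (i : ℕ) =
          (verschiebung^[n + 1] _ : WittVector p A).coeff (i : ℕ)
        rcases lt_or_ge (i : ℕ) (n + 1) with hi | hi
        · rw [iterate_verschiebung_coeff_lt _ _ hi, iterate_verschiebung_coeff_lt _ _ hi]
        · have hieq : (i : ℕ) = n + 1 := by omega
          rw [hieq]
          have h1 := iterate_verschiebung_coeff
            (WittVector.mk p (fun i => if i = 0 then a + b else 0)) (n + 1) 0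
          have h2 := iterate_verschiebung_coeff
            ((WittVector.mk p (fun i => if i = 0 then a else 0)) +
             (WittVector.mk p (fun i => if i = 0 then b else 0))) (n + 1) 0
          rw [zero_add] at h1 h2
          rw [h1, h2, WittVector.coeff_mk, WittVector.add_coeff_zero, WittVector.coeff_mk,
            WittVector.coeff_mk]
          simp
      have hg_smul : ∀ (r : R) (a : A), g (r • a) = r • g a := by
        intro r a
        obtain ⟨w, hw, hghost⟩ := hφ r
        rw [smul_def, ← hw, ← map_mul]
        -- w * V^{n+1} x = V^{n+1} (x * F^{n+1} w)
        have key : w * verschiebung^[n + 1] (WittVector.mk p (fun i => if i = 0 then a else 0)) =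
            verschiebung^[n + 1] ((WittVector.mk p (fun i => if i = 0 then a else 0)) *
              frobenius^[n + 1] w) := by
          rw [mul_comm]
          exact iterate_verschiebung_mul_left _ _ _
        rw [key]
        apply TruncatedWittVector.ext
        intro i
        rw [hg_coeff, WittVector.coeff_truncate]
        show _ = (verschiebung^[n + 1] _ : WittVector p A).coeff (i : ℕ)
        rcases eq_or_ne (i : ℕ) (n + 1) with h | h
        · rw [if_pos h, h]
          have h1 := iterate_verschiebung_coeff
            ((WittVector.mk p (fun i => if i = 0 then a else 0)) * frobenius^[n + 1] w)
            (n + 1) 0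
          rw [zero_add] at h1
          rw [h1, WittVector.mul_coeff_zero, WittVector.coeff_mk]
          have h0 : (frobenius^[n + 1] w).coeff 0 = algebraMap R A r := by
            rw [← ghostComponent_zero_eq, ghostComponent_iterate_frobenius]
            exact hghost (n + 1) (le_refl _)
          rw [h0]
          simp [Algebra.smul_def, mul_comm]
        · rw [if_neg h]
          exact (iterate_verschiebung_coeff_lt _ _ (by omega) _).symm
      let L : A →ₗ[R] TruncatedWittVector p (n + 2) A :=
        { toFun := g, map_add' := hg_add, map_smul' := fun r a => (hg_smul r a).symm ▸ rfl }
      -- range L = ker T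
      have hker : LinearMap.ker T ≤ LinearMap.range L := by
        intro x hx
        refine ⟨x.coeff ⟨n + 1, by omega⟩, ?_⟩
        apply TruncatedWittVector.ext
        intro i
        show (g (x.coeff ⟨n + 1, by omega⟩)).coeff i = x.coeff i
        rw [hg_coeff]
        rcases eq_or_ne (i : ℕ) (n + 1) with h | h
        · rw [if_pos h]
          congr 1
          exact Fin.ext h.symm
        · rw [if_neg h]
          have hx' : ψ x = 0 := hx
          have : (ψ x).coeff ⟨(i : ℕ), by omega⟩ = 0 := by
            simp [hx']
          rw [TruncatedWittVector.coeff_truncate] at this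
          rw [← this]
          congr 1
      have hTsurj : Function.Surjective T :=
        TruncatedWittVector.truncate_surjective (p := p) (R := A) (by omega : n + 1 ≤ n + 2)
      constructor
      apply Submodule.fg_of_fg_map_of_fg_inf_ker T
      · have : Submodule.map T ⊤ = ⊤ := by
          rw [Submodule.map_top, LinearMap.range_eq_top]
          exact hTsurj
        rw [this]
        exact Module.Finite.fg_top
      · rw [top_inf_eq]
        have : LinearMap.ker T = LinearMap.range L :=
          le_antisymm hker (by
            rintro _ ⟨a, rfl⟩
            show ψ (g a) = 0
            apply TruncatedWittVector.ext
            intro i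
            rw [TruncatedWittVector.coeff_truncate]
            show (g a).coeff _ = (0 : TruncatedWittVector p (n + 1) A).coeff i
            rw [hg_coeff, TruncatedWittVector.coeff_zero]
            have : ((Fin.castLE (by omega) i : Fin (n + 2)) : ℕ) ≠ n + 1 := by
              have := i.isLt; simp only [Fin.coe_castLE]; omega
            rw [if_neg this])
        rw [this, ← Submodule.map_top]
        exact Submodule.FG.map L Module.Finite.fg_top

end aux

/-- If `A` is a finite (module-finite) algebra over a discrete valuation
ring `R` with `p` in the maximal ideal, then `W_n(A)` is a finite `R`-algebra.
(Normalized indexing: `W_n = TruncatedWittVector p (n+1)`.) The `R`-algebra structure on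
`W_n(A)` is given by a ring homomorphism `φ : R → W_n(A)` whose ghost components are all
equal to the structure map `R → A` (the canonical structure map of the `E`-typical theory). -/
theorem witt_finite_over_dvr (p : ℕ) [Fact p.Prime] (n : ℕ)
    (R : Type) [CommRing R] [IsDomain R] [IsDiscreteValuationRing R]
    (hp : (p : R) ∈ IsLocalRing.maximalIdeal R)
    (A : Type) [CommRing A] [Algebra R A] [Module.Finite R A]
    (φ : R →+* TruncatedWittVector p (n + 1) A)
    (hφ : ∀ r : R, ∃ w : WittVector p A, WittVector.truncate (n + 1) w = φ r ∧
      ∀ i : ℕ, i ≤ n → WittVector.ghostComponent i w = algebraMap R A r) :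
    @Module.Finite R (TruncatedWittVector p (n + 1) A) _ _ φ.toModule :=
  aux n R φ hφ
end

section
/- The unital ℤ-algebra ℤ[x,δ]/(x² − p·x, 2x^p·δ + p·δ² − x^p − p·δ + p^{p−1}·x^p), which computes Λ_1 ⊙ ℤ[x]/(x²−px) (the coordinate ring of the first p-typical arithmetic jet space of Spec ℤ[x]/(x²−px)), satisfies 𝔽_p ⊗_ℤ (Λ_1 ⊙ A) ≅ 𝔽_p[x,δ]/(x²); in particular Λ_1 ⊙ A is not flat over ℤ, even though A = ℤ[x]/(x²−px) is flat over ℤ. -/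
open scoped TensorProduct

/-- The ring `ℤ[x]/(x² − p·x)`. -/
def flatBaseRing (p : ℕ) : Type :=
  Polynomial ℤ ⧸ Ideal.span {Polynomial.X ^ 2 - Polynomial.C (p : ℤ) * Polynomial.X}

noncomputable instance (p : ℕ) : CommRing (flatBaseRing p) :=
  inferInstanceAs (CommRing (Polynomial ℤ ⧸ Ideal.span
    {Polynomial.X ^ 2 - Polynomial.C (p : ℤ) * Polynomial.X}))

/-- The ring `ℤ[x,δ]/(x² − p·x, 2x^p·δ + p·δ² − x^p − p·δ + p^(p−1)·x^p)`, which computes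
`Λ_1 ⊙ ℤ[x]/(x²−px)`, the coordinate ring of the first `p`-typical arithmetic jet space of
`Spec ℤ[x]/(x²−px)`. The variable `X 0` is `x` and `X 1` is `δ`. -/
def jetRingOfFlatBase (p : ℕ) : Type :=
  MvPolynomial (Fin 2) ℤ ⧸ Ideal.span
    {MvPolynomial.X 0 ^ 2 - (p : MvPolynomial (Fin 2) ℤ) * MvPolynomial.X 0,
     2 * MvPolynomial.X 0 ^ p * MvPolynomial.X 1
       + (p : MvPolynomial (Fin 2) ℤ) * MvPolynomial.X 1 ^ 2
       - MvPolynomial.X 0 ^ p - (p : MvPolynomial (Fin 2) ℤ) * MvPolynomial.X 1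
       + (p : MvPolynomial (Fin 2) ℤ) ^ (p - 1) * MvPolynomial.X 0 ^ p}

noncomputable instance (p : ℕ) : CommRing (jetRingOfFlatBase p) :=
  inferInstanceAs (CommRing (MvPolynomial (Fin 2) ℤ ⧸ Ideal.span
    {MvPolynomial.X 0 ^ 2 - (p : MvPolynomial (Fin 2) ℤ) * MvPolynomial.X 0,
     2 * MvPolynomial.X 0 ^ p * MvPolynomial.X 1
       + (p : MvPolynomial (Fin 2) ℤ) * MvPolynomial.X 1 ^ 2
       - MvPolynomial.X 0 ^ p - (p : MvPolynomial (Fin 2) ℤ) * MvPolynomial.X 1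
       + (p : MvPolynomial (Fin 2) ℤ) ^ (p - 1) * MvPolynomial.X 0 ^ p}))

set_option maxHeartbeats 1000000
set_option synthInstance.maxHeartbeats 400000

namespace JetOfFlatAux

open MvPolynomial TensorProduct

variable (p : ℕ)

/-- the defining ideal of the jet ring -/
noncomputable abbrev Ip : Ideal (MvPolynomial (Fin 2) ℤ) :=
  Ideal.span
    {X 0 ^ 2 - (p : MvPolynomial (Fin 2) ℤ) * X 0,
     2 * X 0 ^ p * X 1 + (p : MvPolynomial (Fin 2) ℤ) * X 1 ^ 2
       - X 0 ^ p - (p : MvPolynomial (Fin 2) ℤ) * X 1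
       + (p : MvPolynomial (Fin 2) ℤ) ^ (p - 1) * X 0 ^ p}

noncomputable def mkJ : MvPolynomial (Fin 2) ℤ →+* jetRingOfFlatBase p :=
  Ideal.Quotient.mk (Ip p)

lemma mkJ_surjective : Function.Surjective (mkJ p) :=
  Ideal.Quotient.mk_surjective

lemma mkJ_eq_zero {a : MvPolynomial (Fin 2) ℤ} (h : a ∈ Ip p) : mkJ p a = 0 :=
  Ideal.Quotient.eq_zero_iff_mem.mpr h

noncomputable def xJ : jetRingOfFlatBase p := mkJ p (X 0)
noncomputable def dJ : jetRingOfFlatBase p := mkJ p (X 1)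

lemma hg1_mem : (X 0 ^ 2 - (p : MvPolynomial (Fin 2) ℤ) * X 0) ∈ Ip p :=
  Ideal.subset_span (Set.mem_insert _ _)

lemma hg2_mem : (2 * X 0 ^ p * X 1 + (p : MvPolynomial (Fin 2) ℤ) * X 1 ^ 2
       - X 0 ^ p - (p : MvPolynomial (Fin 2) ℤ) * X 1
       + (p : MvPolynomial (Fin 2) ℤ) ^ (p - 1) * X 0 ^ p) ∈ Ip p :=
  Ideal.subset_span (Set.mem_insert_of_mem _ rfl)

lemma hx2 : xJ p ^ 2 = (p : jetRingOfFlatBase p) * xJ p := by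
  have h := mkJ_eq_zero p (hg1_mem p)
  simp only [map_sub, map_mul, map_pow, map_natCast, sub_eq_zero] at h
  exact h

lemma hg2' : 2 * xJ p ^ p * dJ p + (p : jetRingOfFlatBase p) * dJ p ^ 2
    - xJ p ^ p - (p : jetRingOfFlatBase p) * dJ p
    + (p : jetRingOfFlatBase p) ^ (p - 1) * xJ p ^ p = 0 := by
  have h := mkJ_eq_zero p (hg2_mem p)
  simp only [map_add, map_sub, map_mul, map_pow, map_natCast, map_ofNat] at h
  exact h

lemma hpow : ∀ k : ℕ, xJ p ^ (k + 1) = (p : jetRingOfFlatBase p) ^ k * xJ p := by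
  intro k
  induction k with
  | zero => simp
  | succ k ih =>
    rw [pow_succ, ih, pow_succ]
    calc (p : jetRingOfFlatBase p) ^ k * xJ p * xJ p
        = (p : jetRingOfFlatBase p) ^ k * xJ p ^ 2 := by ring
      _ = (p : jetRingOfFlatBase p) ^ k * ((p : jetRingOfFlatBase p) * xJ p) := by rw [hx2]
      _ = _ := by ring

noncomputable def Tpoly : MvPolynomial (Fin 2) ℤ :=
  X 0 * (2 * (p : MvPolynomial (Fin 2) ℤ) ^ (p - 1) * X 1 + X 1 ^ 2
    - (p : MvPolynomial (Fin 2) ℤ) ^ (p - 1) - X 1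
    + (p : MvPolynomial (Fin 2) ℤ) ^ (2 * (p - 1)))

noncomputable def tJ : jetRingOfFlatBase p := mkJ p (Tpoly p)

variable [Fact p.Prime]

lemma psmul : (p : jetRingOfFlatBase p) * tJ p = 0 := by
  have hp1 : p = (p - 1) + 1 := (Nat.succ_pred_eq_of_pos (Fact.out : p.Prime).pos).symm
  have hx2 := hx2 p
  have hg2 := hg2' p
  set P : jetRingOfFlatBase p := (p : jetRingOfFlatBase p) with hP
  have hxx : xJ p * xJ p ^ p = P * P ^ (p - 1) * xJ p := by
    have h1 := hpow p p
    have h2 : P ^ p = P * P ^ (p - 1) := by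
      rw [← pow_succ']
      congr 1
    calc xJ p * xJ p ^ p = xJ p ^ (p + 1) := by rw [pow_succ]; ring
      _ = P ^ p * xJ p := h1
      _ = P * P ^ (p - 1) * xJ p := by rw [h2]
  have ht : tJ p = xJ p * (2 * P ^ (p - 1) * dJ p + dJ p ^ 2 - P ^ (p - 1) - dJ p
      + P ^ (p - 1) * P ^ (p - 1)) := by
    simp only [tJ, Tpoly, map_mul, map_add, map_sub, map_pow, map_natCast, map_ofNat, hP,
      two_mul, pow_add]
    rfl
  rw [ht]
  linear_combination (xJ p) * hg2 - (2 * dJ p - 1 + P ^ (p - 1)) * hxx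

open DualNumber TrivSqZeroExt in
noncomputable def evD : MvPolynomial (Fin 2) ℤ →ₐ[ℤ] DualNumber (Polynomial (ZMod p)) :=
  aeval ![ε, inl Polynomial.X]

lemma hpD : ((p : ℕ) : DualNumber (Polynomial (ZMod p))) = 0 := by
  rw [← map_natCast (algebraMap (ZMod p) (DualNumber (Polynomial (ZMod p)))) p,
    ZMod.natCast_self, map_zero]

lemma hepsp : (DualNumber.eps : DualNumber (Polynomial (ZMod p))) ^ p = 0 := by
  have h : (DualNumber.eps : DualNumber (Polynomial (ZMod p))) ^ p
      = DualNumber.eps ^ 2 * DualNumber.eps ^ (p - 2) := by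
    rw [← pow_add]
    congr 1
    have := (Fact.out : p.Prime).two_le
    omega
  rw [h, pow_two, DualNumber.eps_mul_eps, zero_mul]

open DualNumber TrivSqZeroExt in
lemma evD_vanish : ∀ a ∈ Ip p, evD p a = 0 := by
  have hsub : ∀ a ∈ ({X 0 ^ 2 - (p : MvPolynomial (Fin 2) ℤ) * X 0,
     2 * X 0 ^ p * X 1 + (p : MvPolynomial (Fin 2) ℤ) * X 1 ^ 2
       - X 0 ^ p - (p : MvPolynomial (Fin 2) ℤ) * X 1
       + (p : MvPolynomial (Fin 2) ℤ) ^ (p - 1) * X 0 ^ p} :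
       Set (MvPolynomial (Fin 2) ℤ)), evD p a = 0 := by
    intro a ha
    have h2 : (ε : DualNumber (Polynomial (ZMod p))) ^ 2 = 0 := by
      rw [pow_two, DualNumber.eps_mul_eps]
    rcases ha with rfl | rfl
    · simp [evD, hpD, h2]
    · simp [evD, hpD, hepsp]
  intro a ha
  refine RingHom.mem_ker.mp ?_
  exact Ideal.span_le.mpr
    (fun x hx => RingHom.mem_ker.mpr (hsub x hx)) ha

noncomputable def phiD : jetRingOfFlatBase p →+* DualNumber (Polynomial (ZMod p)) :=
  Ideal.Quotient.lift (Ip p) (evD p).toRingHom (evD_vanish p)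

open DualNumber TrivSqZeroExt in
lemma phiD_t : phiD p (tJ p) = inr (Polynomial.X ^ 2 - Polynomial.X) := by
  have hq1 : p - 1 ≠ 0 := by
    have := (Fact.out : p.Prime).two_le; omega
  have hq2 : 2 * (p - 1) ≠ 0 := by
    have := (Fact.out : p.Prime).two_le; omega
  have h1 : phiD p (tJ p) = evD p (Tpoly p) := rfl
  rw [h1]
  have h2 : evD p (Tpoly p)
      = ε * ((inl Polynomial.X : DualNumber (Polynomial (ZMod p))) ^ 2 - inl Polynomial.X) := by
    simp [evD, Tpoly, hpD, zero_pow hq1, zero_pow hq2]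
  rw [h2]
  rw [show ((inl Polynomial.X : DualNumber (Polynomial (ZMod p))) ^ 2 - inl Polynomial.X)
      = inl (Polynomial.X ^ 2 - Polynomial.X) by rw [inl_sub, inl_pow]]
  rw [mul_comm, inl_mul_eq_smul, ← inr_eq_smul_eps]

lemma tJ_ne_zero : tJ p ≠ 0 := by
  intro h
  have h2 := phiD_t p
  rw [h, map_zero] at h2
  have h3 : (Polynomial.X ^ 2 - Polynomial.X : Polynomial (ZMod p)) = 0 :=
    TrivSqZeroExt.inr_injective (by rw [← h2]; rfl)
  have h4 := congrArg (fun q => Polynomial.coeff q 2) h3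
  simp [Polynomial.coeff_X] at h4


section Iso

variable (p : ℕ) [Fact p.Prime]

lemma hpK : ((p : ℕ) : MvPolynomial (Fin 2) (ZMod p)) = 0 := by
  rw [← map_natCast (C : ZMod p →+* MvPolynomial (Fin 2) (ZMod p)) p, ZMod.natCast_self, map_zero]

noncomputable def preFJ : MvPolynomial (Fin 2) ℤ →+*
    (MvPolynomial (Fin 2) (ZMod p) ⧸
      Ideal.span {(X 0 : MvPolynomial (Fin 2) (ZMod p)) ^ 2}) :=
  (Ideal.Quotient.mk (Ideal.span {(X 0 : MvPolynomial (Fin 2) (ZMod p)) ^ 2})).comp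
    (MvPolynomial.map (Int.castRingHom (ZMod p)))

lemma preFJ_vanish : ∀ a ∈ Ip p, preFJ p a = 0 := by
  have hsub : ∀ a ∈ ({X 0 ^ 2 - (p : MvPolynomial (Fin 2) ℤ) * X 0,
     2 * X 0 ^ p * X 1 + (p : MvPolynomial (Fin 2) ℤ) * X 1 ^ 2
       - X 0 ^ p - (p : MvPolynomial (Fin 2) ℤ) * X 1
       + (p : MvPolynomial (Fin 2) ℤ) ^ (p - 1) * X 0 ^ p} :
       Set (MvPolynomial (Fin 2) ℤ)), preFJ p a = 0 := by
    have hq1 : p - 1 ≠ 0 := by have := (Fact.out : p.Prime).two_le; omega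
    have h2p : 2 ≤ p := (Fact.out : p.Prime).two_le
    intro a ha
    rcases ha with rfl | rfl
    · have h : (MvPolynomial.map (Int.castRingHom (ZMod p)))
          (X 0 ^ 2 - (p : MvPolynomial (Fin 2) ℤ) * X 0)
          = (X 0 : MvPolynomial (Fin 2) (ZMod p)) ^ 2 := by
        simp [hpK]
      rw [preFJ, RingHom.comp_apply, h]
      exact Ideal.Quotient.eq_zero_iff_mem.mpr (Ideal.subset_span rfl)
    · have h : (MvPolynomial.map (Int.castRingHom (ZMod p)))
          (2 * X 0 ^ p * X 1 + (p : MvPolynomial (Fin 2) ℤ) * X 1 ^ 2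
            - X 0 ^ p - (p : MvPolynomial (Fin 2) ℤ) * X 1
            + (p : MvPolynomial (Fin 2) ℤ) ^ (p - 1) * X 0 ^ p)
          = 2 * (X 0 : MvPolynomial (Fin 2) (ZMod p)) ^ p * X 1 - X 0 ^ p := by
        simp [hpK, zero_pow hq1]
      rw [preFJ, RingHom.comp_apply, h]
      refine Ideal.Quotient.eq_zero_iff_mem.mpr (Ideal.mem_span_singleton.mpr ?_)
      exact dvd_sub (((pow_dvd_pow (X 0) h2p).mul_left 2).mul_right (X 1))
        (pow_dvd_pow (X 0) h2p)
  intro a ha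
  refine RingHom.mem_ker.mp ?_
  exact Ideal.span_le.mpr (fun x hx => RingHom.mem_ker.mpr (hsub x hx)) ha

noncomputable def fJ : jetRingOfFlatBase p →+*
    (MvPolynomial (Fin 2) (ZMod p) ⧸
      Ideal.span {(X 0 : MvPolynomial (Fin 2) (ZMod p)) ^ 2}) :=
  Ideal.Quotient.lift (Ip p) (preFJ p) (preFJ_vanish p)

lemma fJ_mk (q : MvPolynomial (Fin 2) ℤ) : fJ p (mkJ p q) = preFJ p q :=
  Ideal.Quotient.lift_mk _ _ _

noncomputable def PhiT : (ZMod p) ⊗[ℤ] jetRingOfFlatBase p →ₐ[ℤ]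
    (MvPolynomial (Fin 2) (ZMod p) ⧸
      Ideal.span {(X 0 : MvPolynomial (Fin 2) (ZMod p)) ^ 2}) :=
  Algebra.TensorProduct.productMap
    (algebraMap (ZMod p) _).toIntAlgHom (fJ p).toIntAlgHom

lemma PhiT_tmul (a : ZMod p) (b : jetRingOfFlatBase p) :
    PhiT p (a ⊗ₜ b) = algebraMap (ZMod p) _ a * fJ p b :=
  Algebra.TensorProduct.productMap_apply_tmul _ _ _ _

noncomputable def psi0 : MvPolynomial (Fin 2) (ZMod p) →ₐ[ZMod p]
    (ZMod p) ⊗[ℤ] jetRingOfFlatBase p :=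
  aeval ![(1 : ZMod p) ⊗ₜ xJ p, (1 : ZMod p) ⊗ₜ dJ p]

lemma psi0_X0 : psi0 p (X 0) = (1 : ZMod p) ⊗ₜ[ℤ] xJ p := by simp [psi0]

lemma psi0_X1 : psi0 p (X 1) = (1 : ZMod p) ⊗ₜ[ℤ] dJ p := by simp [psi0]

lemma psi0_vanish :
    ∀ a ∈ Ideal.span {(X 0 : MvPolynomial (Fin 2) (ZMod p)) ^ 2}, psi0 p a = 0 := by
  have key : psi0 p ((X 0 : MvPolynomial (Fin 2) (ZMod p)) ^ 2) = 0 := by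
    have hx : xJ p * xJ p = (p : ℤ) • xJ p := by
      rw [← pow_two, hx2 p, zsmul_eq_mul, Int.cast_natCast]
    calc psi0 p ((X 0 : MvPolynomial (Fin 2) (ZMod p)) ^ 2)
        = ((1 : ZMod p) ⊗ₜ[ℤ] xJ p) * ((1 : ZMod p) ⊗ₜ[ℤ] xJ p) := by
          rw [map_pow, psi0_X0, pow_two]
      _ = (1 : ZMod p) ⊗ₜ[ℤ] (xJ p * xJ p) := by
          rw [Algebra.TensorProduct.tmul_mul_tmul, mul_one]
      _ = (1 : ZMod p) ⊗ₜ[ℤ] ((p : ℤ) • xJ p) := by rw [hx]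
      _ = (p : ℤ) • ((1 : ZMod p) ⊗ₜ[ℤ] xJ p) := by rw [tmul_smul]
      _ = (p : ZMod p) • ((1 : ZMod p) ⊗ₜ[ℤ] xJ p) := by
          rw [natCast_zsmul, ← Nat.cast_smul_eq_nsmul (ZMod p)]
      _ = 0 := by rw [ZMod.natCast_self, zero_smul]
  intro a ha
  refine RingHom.mem_ker.mp ?_
  refine Ideal.span_le.mpr (fun x hx => RingHom.mem_ker.mpr ?_) ha
  rcases hx with rfl
  exact key

noncomputable def PsiT :
    (MvPolynomial (Fin 2) (ZMod p) ⧸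
      Ideal.span {(X 0 : MvPolynomial (Fin 2) (ZMod p)) ^ 2}) →+*
    (ZMod p) ⊗[ℤ] jetRingOfFlatBase p :=
  Ideal.Quotient.lift _ (psi0 p).toRingHom (psi0_vanish p)

lemma PsiT_mk (q : MvPolynomial (Fin 2) (ZMod p)) :
    PsiT p (Ideal.Quotient.mk _ q) = psi0 p q :=
  Ideal.Quotient.lift_mk _ _ _

lemma PsiT_algebraMap (a : ZMod p) :
    PsiT p (algebraMap (ZMod p)
      (MvPolynomial (Fin 2) (ZMod p) ⧸
        Ideal.span {(X 0 : MvPolynomial (Fin 2) (ZMod p)) ^ 2}) a)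
      = a ⊗ₜ[ℤ] (1 : jetRingOfFlatBase p) := by
  have h := RingHom.ext_zmod
    ((PsiT p).comp (algebraMap (ZMod p)
      (MvPolynomial (Fin 2) (ZMod p) ⧸
        Ideal.span {(X 0 : MvPolynomial (Fin 2) (ZMod p)) ^ 2})))
    (Algebra.TensorProduct.includeLeftRingHom
      (R := ℤ) (A := ZMod p) (B := jetRingOfFlatBase p))
  exact RingHom.congr_fun h a

lemma PsiT_fJ (b : jetRingOfFlatBase p) :
    PsiT p (fJ p b) = (1 : ZMod p) ⊗ₜ[ℤ] b := by
  obtain ⟨q, rfl⟩ := mkJ_surjective p b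
  have hcomp : ((PsiT p).comp (preFJ p))
      = (Algebra.TensorProduct.includeRight
          (R := ℤ) (A := ZMod p) (B := jetRingOfFlatBase p)).toRingHom.comp (mkJ p) := by
    apply MvPolynomial.ringHom_ext
    · intro r
      have h := RingHom.ext_int
        (((PsiT p).comp (preFJ p)).comp (MvPolynomial.C))
        (((Algebra.TensorProduct.includeRight
          (R := ℤ) (A := ZMod p) (B := jetRingOfFlatBase p)).toRingHom.comp
            (mkJ p)).comp (MvPolynomial.C))
      exact RingHom.congr_fun h r
    · intro i
      fin_cases i
      · show PsiT p (preFJ p (X 0)) = _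
        rw [show preFJ p (X 0) = Ideal.Quotient.mk _ (X 0) by simp [preFJ]]
        rw [PsiT_mk, psi0_X0]
        rfl
      · show PsiT p (preFJ p (X 1)) = _
        rw [show preFJ p (X 1) = Ideal.Quotient.mk _ (X 1) by simp [preFJ]]
        rw [PsiT_mk, psi0_X1]
        rfl
  rw [fJ_mk]
  exact RingHom.congr_fun hcomp q

lemma comp1 : (PsiT p).comp (PhiT p).toRingHom
    = RingHom.id ((ZMod p) ⊗[ℤ] jetRingOfFlatBase p) := by
  refine RingHom.ext fun z => ?_
  simp only [RingHom.comp_apply, RingHom.id_apply, AlgHom.toRingHom_eq_coe,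
    RingHom.coe_coe]
  induction z using TensorProduct.induction_on with
  | zero => simp
  | tmul a b =>
      rw [PhiT_tmul, map_mul, PsiT_algebraMap, PsiT_fJ,
        Algebra.TensorProduct.tmul_mul_tmul, mul_one, one_mul]
  | add x y hx hy => rw [map_add, map_add, hx, hy]

lemma comp2 : (PhiT p).toRingHom.comp (PsiT p)
    = RingHom.id (MvPolynomial (Fin 2) (ZMod p) ⧸
        Ideal.span {(X 0 : MvPolynomial (Fin 2) (ZMod p)) ^ 2}) := by
  apply Ideal.Quotient.ringHom_ext
  apply MvPolynomial.ringHom_ext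
  · intro r
    have h := RingHom.ext_zmod
      ((((PhiT p).toRingHom.comp (PsiT p)).comp (Ideal.Quotient.mk _)).comp
        (MvPolynomial.C))
      (((RingHom.id _).comp (Ideal.Quotient.mk _)).comp (MvPolynomial.C))
    exact RingHom.congr_fun h r
  · intro i
    fin_cases i
    · show PhiT p (PsiT p (Ideal.Quotient.mk _ (X 0))) = Ideal.Quotient.mk _ (X 0)
      rw [PsiT_mk, psi0_X0, PhiT_tmul, map_one, one_mul, show xJ p = mkJ p (X 0) from rfl,
        fJ_mk]
      simp [preFJ]
    · show PhiT p (PsiT p (Ideal.Quotient.mk _ (X 1))) = Ideal.Quotient.mk _ (X 1)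
      rw [PsiT_mk, psi0_X1, PhiT_tmul, map_one, one_mul, show dJ p = mkJ p (X 1) from rfl,
        fJ_mk]
      simp [preFJ]

noncomputable def theEquiv : (ZMod p) ⊗[ℤ] jetRingOfFlatBase p ≃+*
    (MvPolynomial (Fin 2) (ZMod p) ⧸
      Ideal.span {(X 0 : MvPolynomial (Fin 2) (ZMod p)) ^ 2}) :=
  RingEquiv.ofRingHom (PhiT p).toRingHom (PsiT p) (comp2 p) (comp1 p)

end Iso

end JetOfFlatAux

/-- The ring `Λ_1 ⊙ A = ℤ[x,δ]/(x² − px, 2x^pδ + pδ² − x^p − pδ + p^(p−1)x^p)`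
(the coordinate ring of the first `p`-typical arithmetic jet space of
`Spec A`, `A = ℤ[x]/(x²−px)`) satisfies `𝔽_p ⊗_ℤ (Λ_1 ⊙ A) ≅ 𝔽_p[x,δ]/(x²)`;
in particular `Λ_1 ⊙ A` is not flat over `ℤ`, even though `A` is flat over `ℤ`. -/
theorem jet_of_flat_not_flat (p : ℕ) [Fact p.Prime] :
    Nonempty ((ZMod p) ⊗[ℤ] jetRingOfFlatBase p ≃+*
      (MvPolynomial (Fin 2) (ZMod p) ⧸
        Ideal.span {(MvPolynomial.X 0 : MvPolynomial (Fin 2) (ZMod p)) ^ 2})) ∧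
    ¬ Module.Flat ℤ (jetRingOfFlatBase p) ∧
    Module.Flat ℤ (flatBaseRing p) := by
  refine ⟨⟨JetOfFlatAux.theEquiv p⟩, ?_, ?_⟩
  · intro hflat
    have hp0 : ((p : ℤ)) ≠ 0 := by
      exact_mod_cast (Fact.out : p.Prime).ne_zero
    set f : ℤ →ₗ[ℤ] ℤ := LinearMap.toSpanSingleton ℤ ℤ (p : ℤ) with hf
    have hfinj : Function.Injective f := by
      intro a b h
      simp only [hf, LinearMap.toSpanSingleton_apply, smul_eq_mul] at h
      exact mul_left_cancel₀ hp0 (by rw [mul_comm (p:ℤ) a, mul_comm (p:ℤ) b]; exact h)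
    have hinj := Module.Flat.rTensor_preserves_injective_linearMap
      (M := jetRingOfFlatBase p) f hfinj
    have hsmul : (p : ℤ) • JetOfFlatAux.tJ p = 0 := by
      rw [zsmul_eq_mul, Int.cast_natCast]
      exact JetOfFlatAux.psmul p
    have h1 : f.rTensor (jetRingOfFlatBase p)
        ((1 : ℤ) ⊗ₜ[ℤ] JetOfFlatAux.tJ p) = 0 := by
      rw [LinearMap.rTensor_tmul]
      have hf1 : f (1 : ℤ) = (p : ℤ) := by simp [hf]
      rw [hf1]
      calc ((p : ℤ)) ⊗ₜ[ℤ] JetOfFlatAux.tJ p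
          = ((p : ℤ) • (1 : ℤ)) ⊗ₜ[ℤ] JetOfFlatAux.tJ p := by rw [smul_eq_mul, mul_one]
        _ = (1 : ℤ) ⊗ₜ[ℤ] ((p : ℤ) • JetOfFlatAux.tJ p) := TensorProduct.smul_tmul _ _ _
        _ = 0 := by rw [hsmul, TensorProduct.tmul_zero]
    have h2 : (1 : ℤ) ⊗ₜ[ℤ] JetOfFlatAux.tJ p = 0 := hinj (by rw [h1, map_zero])
    have h3 := congrArg (TensorProduct.lid ℤ (jetRingOfFlatBase p)) h2
    simp only [map_zero, TensorProduct.lid_tmul, one_smul] at h3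
    exact JetOfFlatAux.tJ_ne_zero p h3
  · have hmonic : (Polynomial.X ^ 2 - Polynomial.C (p : ℤ) * Polynomial.X).Monic := by
      apply Polynomial.monic_X_pow_sub
      have h1 : (Polynomial.C (p : ℤ) * Polynomial.X).degree ≤ 1 := by
        refine le_trans (Polynomial.degree_mul_le _ _) ?_
        rw [Polynomial.degree_X]
        refine le_trans (add_le_add_left Polynomial.degree_C_le _) ?_
        norm_num
      exact lt_of_le_of_lt h1 (by norm_num)
    haveI hfree : Module.Free ℤ
        (AdjoinRoot (Polynomial.X ^ 2 - Polynomial.C (p : ℤ) * Polynomial.X)) :=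
      Module.Free.of_basis (AdjoinRoot.powerBasis' hmonic).basis
    have hflat : Module.Flat ℤ
        (AdjoinRoot (Polynomial.X ^ 2 - Polynomial.C (p : ℤ) * Polynomial.X)) :=
      Module.Flat.of_free
    letI : Unique (Module ℤ (flatBaseRing p)) := AddCommGroup.uniqueIntModule
    have key : ∀ (i1 i2 : Module ℤ (flatBaseRing p)),
        @Module.Flat ℤ (flatBaseRing p) _ _ i1 → @Module.Flat ℤ (flatBaseRing p) _ _ i2 := by
      intro i1 i2 h
      rwa [Subsingleton.elim i1 i2] at h
    exact key _ _ hflat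
end

section
/- Let k be a field of characteristic p. Then W_1(k) (p-typical Witt vectors of length 1, i.e., length-2 classical Witt vectors) is a local ring whose maximal ideal V_p(k) is isomorphic as a W_1(k)-module to k with the W_1(k)-action through the composite W_1(k) → k → k, a ↦ a^p twisted, i.e., the maximal ideal squared is zero and the maximal ideal is isomorphic to k^{1/p} as a k-vector space; consequently W_1(k) is noetherian if and only if k has a finite p-basis (equivalently [k : k^p] < ∞). -/
set_option linter.unusedSectionVars false
set_option linter.unnecessarySimpa false

namespace WittLengthOneAux

open WittVector

variable {p : ℕ} [Fact p.Prime] {k : Type} [Field k] [CharP k p]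

lemma tr_out (x : TruncatedWittVector p 2 k) : WittVector.truncate 2 x.out = x :=
  x.truncateFun_out

lemma coeff0_tr (X : WittVector p k) :
    (WittVector.truncate 2 X).coeff 0 = X.coeff 0 := by
  simpa using WittVector.coeff_truncate (p := p) X (0 : Fin 2)

lemma coeff1_tr (X : WittVector p k) :
    (WittVector.truncate 2 X).coeff 1 = X.coeff 1 := by
  simpa using WittVector.coeff_truncate (p := p) X (1 : Fin 2)

lemma out0 (x : TruncatedWittVector p 2 k) : x.out.coeff 0 = x.coeff 0 := by
  simpa using TruncatedWittVector.coeff_out x (0 : Fin 2)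

lemma out1 (x : TruncatedWittVector p 2 k) : x.out.coeff 1 = x.coeff 1 := by
  simpa using TruncatedWittVector.coeff_out x (1 : Fin 2)

/-- the constant-coefficient ring hom on length-2 truncated Witt vectors -/
noncomputable def c0 : TruncatedWittVector p 2 k →+* k where
  toFun x := x.coeff 0
  map_one' := by
    show (TruncatedWittVector.coeff 0 (1 : TruncatedWittVector p 2 k)) = 1
    rw [← map_one (WittVector.truncate (p := p) (R := k) 2), coeff0_tr]
    exact WittVector.one_coeff_zero p k
  map_mul' x y := by
    show (x * y).coeff 0 = x.coeff 0 * y.coeff 0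
    rw [← tr_out x, ← tr_out y, ← map_mul, coeff0_tr, coeff0_tr, coeff0_tr]
    exact WittVector.mul_coeff_zero _ _
  map_zero' := by
    show (TruncatedWittVector.coeff 0 (0 : TruncatedWittVector p 2 k)) = 0
    simpa using TruncatedWittVector.coeff_zero (p := p) (R := k) (0 : Fin 2)
  map_add' x y := by
    show (x + y).coeff 0 = x.coeff 0 + y.coeff 0
    rw [← tr_out x, ← tr_out y, ← map_add, coeff0_tr, coeff0_tr, coeff0_tr]
    exact WittVector.add_coeff_zero _ _

lemma c0_apply (x : TruncatedWittVector p 2 k) : c0 x = x.coeff 0 := rfl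

instance : Nontrivial (TruncatedWittVector p 2 k) :=
  ⟨0, 1, fun h => by
    have := congrArg (c0 (p := p) (k := k)) h
    rw [map_zero, map_one] at this
    exact zero_ne_one this⟩

lemma isUnit_iff (x : TruncatedWittVector p 2 k) : IsUnit x ↔ x.coeff 0 ≠ 0 := by
  constructor
  · intro h h0
    have : IsUnit (c0 x) := c0.isUnit_map h
    rw [c0_apply, h0] at this
    exact not_isUnit_zero this
  · intro h
    have hx : x.out.coeff 0 ≠ 0 := by rwa [out0]
    have := (WittVector.isUnit_of_coeff_zero_ne_zero x.out hx).map
      (WittVector.truncate (p := p) (R := k) 2)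
    rwa [tr_out] at this

lemma local_ : IsLocalRing (TruncatedWittVector p 2 k) := by
  apply IsLocalRing.of_isUnit_or_isUnit_one_sub_self
  intro a
  by_cases h : a.coeff 0 = 0
  · right
    rw [isUnit_iff, ← c0_apply, map_sub, map_one, c0_apply, h, sub_zero]
    exact one_ne_zero
  · exact Or.inl ((isUnit_iff a).2 h)

lemma mem_max_iff (x : TruncatedWittVector p 2 k) :
    x ∈ @IsLocalRing.maximalIdeal (TruncatedWittVector p 2 k) _ local_ ↔
      x.coeff 0 = 0 := by
  letI : IsLocalRing (TruncatedWittVector p 2 k) := local_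
  rw [IsLocalRing.mem_maximalIdeal, mem_nonunits_iff, isUnit_iff, not_not]

lemma mul_eq_zero_of (x y : TruncatedWittVector p 2 k) (hx : x.coeff 0 = 0)
    (hy : y.coeff 0 = 0) : x * y = 0 := by
  rw [← tr_out x, ← tr_out y, ← map_mul]
  have hX : x.out.coeff 0 = 0 := by rwa [out0]
  have hY : y.out.coeff 0 = 0 := by rwa [out0]
  rw [← RingHom.mem_ker, WittVector.mem_ker_truncate]
  intro i hi
  have hX' : x.out = WittVector.verschiebung (x.out.shift 1) := by
    apply WittVector.eq_iterate_verschiebung (n := 1)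
    intro j hj
    interval_cases j
    exact hX
  rw [hX', ← WittVector.verschiebung_mul_frobenius]
  interval_cases i
  · exact WittVector.verschiebung_coeff_zero _
  · rw [WittVector.verschiebung_coeff_add_one,
      WittVector.mul_coeff_zero, WittVector.coeff_frobenius_charP, hY,
      zero_pow (Fact.out : p.Prime).ne_zero, mul_zero]

/-- `V2 a = V(⟦a⟧)` truncated to length 2. -/
noncomputable def V2 (a : k) : TruncatedWittVector p 2 k :=
  WittVector.truncate 2 (WittVector.verschiebung (WittVector.teichmuller p a))

lemma V2_coeff_zero (a : k) : (V2 (p := p) a).coeff 0 = 0 := by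
  rw [V2, coeff0_tr]
  exact WittVector.verschiebung_coeff_zero _

lemma V2_coeff_one (a : k) : (V2 (p := p) a).coeff 1 = a := by
  rw [V2, coeff1_tr]
  show (WittVector.verschiebung (WittVector.teichmuller p a)).coeff (0 + 1) = a
  rw [WittVector.verschiebung_coeff_add_one]
  exact WittVector.teichmuller_coeff_zero p a

lemma tr_versch_eq (z w : WittVector p k) (h : z.coeff 0 = w.coeff 0) :
    WittVector.truncate 2 (WittVector.verschiebung z) =
    WittVector.truncate 2 (WittVector.verschiebung w) := by
  ext i
  fin_cases i
  · show TruncatedWittVector.coeff 0 _ = TruncatedWittVector.coeff 0 _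
    rw [coeff0_tr, coeff0_tr, WittVector.verschiebung_coeff_zero,
      WittVector.verschiebung_coeff_zero]
  · show TruncatedWittVector.coeff 1 _ = TruncatedWittVector.coeff 1 _
    rw [coeff1_tr, coeff1_tr]
    show (WittVector.verschiebung z).coeff (0 + 1) = (WittVector.verschiebung w).coeff (0 + 1)
    rw [WittVector.verschiebung_coeff_add_one, WittVector.verschiebung_coeff_add_one, h]

lemma V2_add (a b : k) : V2 (p := p) (a + b) = V2 a + V2 b := by
  rw [V2, V2, V2, ← map_add, ← map_add]
  apply tr_versch_eq
  rw [WittVector.add_coeff_zero, WittVector.teichmuller_coeff_zero,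
    WittVector.teichmuller_coeff_zero, WittVector.teichmuller_coeff_zero]

lemma V2_smul (c a : k) :
    WittVector.truncate 2 (WittVector.teichmuller p c) * V2 a = V2 (p := p) (c ^ p * a) := by
  rw [V2, V2, ← map_mul]
  have : WittVector.teichmuller p c * WittVector.verschiebung (WittVector.teichmuller p a)
      = WittVector.verschiebung (WittVector.teichmuller p a *
          WittVector.frobenius (WittVector.teichmuller p c)) := by
    rw [WittVector.verschiebung_mul_frobenius, mul_comm]
  rw [this]
  apply tr_versch_eq
  rw [WittVector.mul_coeff_zero, WittVector.coeff_frobenius_charP,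
    WittVector.teichmuller_coeff_zero, WittVector.teichmuller_coeff_zero,
    WittVector.teichmuller_coeff_zero, mul_comm]

lemma V2_eq_of_mem (x : TruncatedWittVector p 2 k) (h : x.coeff 0 = 0) :
    x = V2 (x.coeff 1) := by
  ext i
  fin_cases i
  · show TruncatedWittVector.coeff 0 _ = TruncatedWittVector.coeff 0 _
    rw [V2_coeff_zero, h]
  · show TruncatedWittVector.coeff 1 _ = TruncatedWittVector.coeff 1 _
    rw [V2_coeff_one]

lemma V2_injective : Function.Injective (V2 (p := p) (k := k)) := by
  intro a b h
  have := congrArg (TruncatedWittVector.coeff 1) h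
  rwa [V2_coeff_one, V2_coeff_one] at this

lemma mul_V2 (w : TruncatedWittVector p 2 k) (a : k) :
    w * V2 a = V2 ((w.coeff 0) ^ p * a) := by
  have key : w * V2 a
      = WittVector.truncate 2 (WittVector.teichmuller p (w.coeff 0)) * V2 a := by
    have hδ : (w - WittVector.truncate 2 (WittVector.teichmuller p (w.coeff 0))).coeff 0
        = 0 := by
      rw [← c0_apply, map_sub, c0_apply, c0_apply, coeff0_tr,
        WittVector.teichmuller_coeff_zero, sub_self]
    have h0 : (w - WittVector.truncate 2 (WittVector.teichmuller p (w.coeff 0))) * V2 a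
        = 0 := mul_eq_zero_of _ _ hδ (V2_coeff_zero a)
    have hs := sub_mul w (WittVector.truncate 2 (WittVector.teichmuller p (w.coeff 0))) (V2 a)
    rw [h0] at hs
    linear_combination -hs
  rw [key, V2_smul]

end WittLengthOneAux

open WittLengthOneAux

/-- Let `k` be a field of characteristic `p`. Then
`W_1(k) = TruncatedWittVector p 2 k` (length-2 classical Witt vectors) is a local ring whose
maximal ideal `V_p(k)` squares to zero and is isomorphic, as an additive group, to `k` with
the `W_1(k)`-action twisted by Frobenius (i.e. `[c] · e(a) = e(c^p · a)`), so the maximal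
ideal is `k^{1/p}` as a `k`-vector space; consequently `W_1(k)` is noetherian if and only if
`k` has a finite `p`-basis, i.e. `k` is module-finite over `k^p` (expressed as finiteness of
the Frobenius ring map). -/

theorem witt_length_one_of_char_p_field (p : ℕ) [Fact p.Prime]
    (k : Type) [Field k] [CharP k p] :
    ∃ h : IsLocalRing (TruncatedWittVector p 2 k),
      (@IsLocalRing.maximalIdeal (TruncatedWittVector p 2 k) _ h) ^ 2 = ⊥ ∧
      (∃ e : k ≃+ ↥(@IsLocalRing.maximalIdeal (TruncatedWittVector p 2 k) _ h),
        ∀ c a : k, ((e (c ^ p * a) : TruncatedWittVector p 2 k)) =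
          WittVector.truncate 2 (WittVector.teichmuller p c) * (e a : TruncatedWittVector p 2 k)) ∧
      (IsNoetherianRing (TruncatedWittVector p 2 k) ↔ (frobenius k p).Finite) := by
  classical
  letI h : IsLocalRing (TruncatedWittVector p 2 k) := local_
  set m := @IsLocalRing.maximalIdeal (TruncatedWittVector p 2 k) _ h with hm
  have hV2zero : V2 (p := p) (k := k) 0 = 0 := by
    have h2 := V2_add (p := p) (k := k) 0 0
    rw [add_zero] at h2
    exact add_eq_left.mp h2.symm
  refine ⟨h, ?_, ?_, ?_⟩
  · -- m ^ 2 = ⊥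
    rw [pow_two]
    refine le_antisymm (Ideal.mul_le.2 fun r hr s hs => ?_) bot_le
    rw [Ideal.mem_bot]
    exact mul_eq_zero_of r s ((mem_max_iff r).1 hr) ((mem_max_iff s).1 hs)
  · -- the additive equivalence
    have hmem : ∀ a : k, V2 (p := p) a ∈ m := fun a => (mem_max_iff _).2 (V2_coeff_zero a)
    let g : k →+ ↥m := AddMonoidHom.mk' (fun a => ⟨V2 a, hmem a⟩)
      (fun a b => Subtype.ext (V2_add a b))
    have hbij : Function.Bijective g := by
      constructor
      · intro a b hab
        exact V2_injective (congrArg Subtype.val hab)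
      · rintro ⟨x, hx⟩
        exact ⟨x.coeff 1, Subtype.ext (V2_eq_of_mem x ((mem_max_iff x).1 hx)).symm⟩
    refine ⟨AddEquiv.ofBijective g hbij, fun c a => ?_⟩
    show V2 (c ^ p * a) = WittVector.truncate 2 (WittVector.teichmuller p c) * V2 a
    exact (V2_smul c a).symm
  · -- noetherian iff frobenius finite
    letI : Algebra k k := (frobenius k p).toAlgebra
    letI : SMul k k := Algebra.toSMul
    letI : Module k k := Algebra.toModule
    have hsmul : ∀ c a : k, c • a = c ^ p * a := fun c a => by
      rw [Algebra.smul_def, RingHom.algebraMap_toAlgebra, frobenius_def]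
    have hfrob : (frobenius k p).Finite ↔ Module.Finite k k := Iff.rfl
    rw [hfrob]
    constructor
    · intro hN
      have hfg : m.FG := IsNoetherian.noetherian m
      obtain ⟨s, hs⟩ := hfg
      set A : Set k := (fun x : TruncatedWittVector p 2 k => x.coeff 1) '' ↑s with hA
      -- the ideal of elements with coeff 0 = 0 and coeff 1 in span A
      let N : Ideal (TruncatedWittVector p 2 k) :=
        { carrier := {x | x.coeff 0 = 0 ∧ x.coeff 1 ∈ Submodule.span k A}
          add_mem' := by
            rintro x y ⟨hx0, hx1⟩ ⟨hy0, hy1⟩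
            have hx := V2_eq_of_mem x hx0
            have hy := V2_eq_of_mem y hy0
            have hxy : x + y = V2 (x.coeff 1 + y.coeff 1) := by
              rw [V2_add, ← hx, ← hy]
            constructor
            · rw [hxy]; exact V2_coeff_zero _
            · rw [hxy, V2_coeff_one]; exact Submodule.add_mem _ hx1 hy1
          zero_mem' := by
            constructor
            · rw [← c0_apply, map_zero]
            · have : (0 : TruncatedWittVector p 2 k).coeff 1 = 0 := by
                simpa using TruncatedWittVector.coeff_zero (p := p) (R := k) (1 : Fin 2)
              rw [this]; exact Submodule.zero_mem _
          smul_mem' := by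
            rintro w x ⟨hx0, hx1⟩
            have hx := V2_eq_of_mem x hx0
            have : w • x = V2 ((w.coeff 0) ^ p * x.coeff 1) := by
              conv_lhs => rw [smul_eq_mul, hx]
              rw [mul_V2]
            constructor
            · rw [this]; exact V2_coeff_zero _
            · rw [this, V2_coeff_one, ← hsmul]
              exact Submodule.smul_mem _ _ hx1 }
      have hmN : m ≤ N := by
        rw [← hs, Ideal.span_le]
        intro x hxs
        have hxm : x ∈ m := by rw [← hs]; exact Ideal.subset_span hxs
        exact ⟨(mem_max_iff x).1 hxm, Submodule.subset_span ⟨x, hxs, rfl⟩⟩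
      refine ⟨⟨s.image (fun x => x.coeff 1), ?_⟩⟩
      rw [Finset.coe_image, ← hA]
      rw [eq_top_iff]
      intro a _
      have : V2 (p := p) a ∈ N := hmN ((mem_max_iff _).2 (V2_coeff_zero a))
      have h1 := this.2
      rwa [V2_coeff_one] at h1
    · intro hFin
      haveI := hFin
      haveI : IsNoetherian k k := isNoetherian_of_isNoetherianRing_of_finite k k
      rw [isNoetherianRing_iff, isNoetherian_def]
      intro I
      by_cases hI : I = ⊤
      · exact hI ▸ ⟨{1}, by simp [Ideal.span_singleton_one]⟩
      have hIm : I ≤ m := IsLocalRing.le_maximalIdeal hI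
      let S : Submodule k k :=
        { carrier := {a | V2 (p := p) a ∈ I}
          add_mem' := fun {a b} ha hb => by
            show V2 (a + b) ∈ I
            rw [V2_add]; exact Ideal.add_mem I ha hb
          zero_mem' := by show V2 (0 : k) ∈ I; rw [hV2zero]; exact Ideal.zero_mem I
          smul_mem' := fun c a ha => by
            show V2 (c • a) ∈ I
            rw [hsmul, ← V2_smul]
            exact Ideal.mul_mem_left I _ ha }
      have hSfg : S.FG := IsNoetherian.noetherian S
      obtain ⟨T, hT⟩ := hSfg
      have key : ∀ a ∈ Submodule.span k (↑T : Set k),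
          V2 (p := p) a ∈ Ideal.span (V2 (p := p) (k := k) '' ↑T) := by
        intro a ha
        induction ha using Submodule.span_induction with
        | mem x hx => exact Ideal.subset_span ⟨x, hx, rfl⟩
        | zero => rw [hV2zero]; exact Ideal.zero_mem _
        | add x y _ _ hx hy => rw [V2_add]; exact Ideal.add_mem _ hx hy
        | smul c x _ hx =>
            rw [hsmul, ← V2_smul]
            exact Ideal.mul_mem_left _ _ hx
      have hIeq : I = Ideal.span (V2 (p := p) (k := k) '' ↑T) := by
        apply le_antisymm
        · intro x hx
          have hx0 : x.coeff 0 = 0 := (mem_max_iff x).1 (hIm hx)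
          have hxe := V2_eq_of_mem x hx0
          have haS : x.coeff 1 ∈ S := by
            show V2 (x.coeff 1) ∈ I
            rw [← hxe]; exact hx
          rw [← hT] at haS
          rw [hxe]
          exact key _ haS
        · rw [Ideal.span_le]
          rintro _ ⟨t, ht, rfl⟩
          have : t ∈ S := by rw [← hT]; exact Submodule.subset_span ht
          exact this
      exact ⟨T.image (fun t => V2 t), by rw [Finset.coe_image]; exact hIeq.symm⟩
end

section
/- Let A be a local ring with p in its maximal ideal, such that both A and W_n(A) are noetherian. If A is Cohen–Macaulay, then W_n(A) is Cohen–Macaulay. -/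
/-- A (noetherian local) commutative ring is Cohen–Macaulay iff it admits a regular sequence,
consisting of nonunits (i.e. elements of the maximal ideal in the local case), whose length
equals its Krull dimension, that is, iff its depth equals its dimension. -/
def IsCohenMacaulayLocalRing (A : Type) [CommRing A] : Prop :=
  ∃ rs : List A, (∀ a ∈ rs, a ∈ nonunits A) ∧ RingTheory.Sequence.IsRegular A rs ∧
    (rs.length : WithBot (WithTop ℕ)) = ringKrullDim A


open RingTheory.Sequence Submodule Pointwise

private lemma mem_smulTop_iff {R M : Type*} [CommRing R] [AddCommGroup M] [Module R M]
    (r : R) (x : M) : x ∈ r • (⊤ : Submodule R M) ↔ ∃ m, r • m = x := by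
  rw [← SetLike.mem_coe, Submodule.coe_pointwise_smul, Set.mem_smul_set]
  simp

private lemma isWeaklyRegular_of_subsingleton {R M : Type*} [CommRing R] [AddCommGroup M]
    [Module R M] [Subsingleton M] (l : List R) : IsWeaklyRegular M l := by
  induction l generalizing M with
  | nil => exact IsWeaklyRegular.nil (R := R) M
  | cons r l ih =>
    rw [isWeaklyRegular_cons_iff]
    refine ⟨fun x y _ => Subsingleton.elim x y, ?_⟩
    haveI : Subsingleton (QuotSMulTop r M) :=
      (Submodule.Quotient.mk_surjective _).subsingleton
    exact ih

private lemma isWeaklyRegular_of_exact {R : Type*} [CommRing R] :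
    ∀ (rs : List R) {K M N : Type*} [AddCommGroup K] [AddCommGroup M] [AddCommGroup N]
    [Module R K] [Module R M] [Module R N] (g : K →ₗ[R] M) (f : M →ₗ[R] N)
    (_ : Function.Injective g) (_ : Function.Surjective f)
    (_ : Function.Exact g f),
    IsWeaklyRegular K rs → IsWeaklyRegular N rs → IsWeaklyRegular M rs := by
  intro rs
  induction rs with
  | nil => intro K M N _ _ _ _ _ _ _ _ _ _ _ _ _; exact IsWeaklyRegular.nil (R := R) M
  | cons r rs ih =>
    intro K M N _ _ _ _ _ _ g f hg hf hex hK hN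
    rw [isWeaklyRegular_cons_iff] at hK hN ⊢
    obtain ⟨hrK, hK⟩ := hK
    obtain ⟨hrN, hN⟩ := hN
    have hreg : IsSMulRegular M r := by
      intro x y hxy
      have hxy' : r • x = r • y := hxy
      have h0 : r • (x - y) = 0 := by rw [smul_sub, hxy', sub_self]
      have hfx : f (x - y) = 0 := by
        refine hrN (a₁ := f (x - y)) (a₂ := 0) ?_
        show r • f (x - y) = r • (0 : N)
        rw [← map_smul f, h0, map_zero, smul_zero]
      obtain ⟨k, hk⟩ := (hex (x - y)).mp hfx
      have h1 : g (r • k) = 0 := by rw [map_smul, hk, h0]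
      have h2 : r • k = 0 := by
        apply hg; rw [h1, map_zero]
      have h3 : k = 0 := by
        refine hrK (a₁ := k) (a₂ := 0) ?_
        show r • k = r • (0 : K)
        rw [h2, smul_zero]
      have : x - y = 0 := by rw [← hk, h3, map_zero]
      exact sub_eq_zero.mp this
    refine ⟨hreg, ?_⟩
    refine ih (QuotSMulTop.map r g) (QuotSMulTop.map r f) ?_ (QuotSMulTop.map_surjective r hf)
      (QuotSMulTop.map_exact r hex hf) hK hN
    rw [injective_iff_map_eq_zero]
    intro q hq
    obtain ⟨k, rfl⟩ := Submodule.Quotient.mk_surjective _ q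
    rw [QuotSMulTop.map_apply_mk, Submodule.Quotient.mk_eq_zero] at hq
    obtain ⟨m, hm⟩ := (mem_smulTop_iff r (g k)).mp hq
    have hfm : f m = 0 := by
      refine hrN (a₁ := f m) (a₂ := 0) ?_
      show r • f m = r • (0 : N)
      rw [smul_zero, ← map_smul, hm, (hex (g k)).mpr ⟨k, rfl⟩]
    obtain ⟨k', hk'⟩ := (hex m).mp hfm
    have : g (r • k') = g k := by rw [map_smul, hk', hm]
    have hkk : k = r • k' := (hg this).symm
    rw [Submodule.Quotient.mk_eq_zero, hkk]
    exact smul_mem_pointwise_smul _ _ _ mem_top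

private lemma isWeaklyRegular_quotSMulTop_pow {R M : Type*} [CommRing R] [AddCommGroup M]
    [Module R M] {a : R} (ha : IsSMulRegular M a) (l : List R)
    (h : IsWeaklyRegular (QuotSMulTop a M) l) :
    ∀ e : ℕ, IsWeaklyRegular (QuotSMulTop (a ^ e) M) l := by
  intro e
  induction e with
  | zero =>
    haveI : Subsingleton (QuotSMulTop (a ^ 0) M) := by
      rw [pow_zero, Submodule.Quotient.subsingleton_iff]
      exact one_smul _ _
    exact isWeaklyRegular_of_subsingleton l
  | succ e ihe =>
    have hle₁ : a ^ e • (⊤ : Submodule R M) ≤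
        Submodule.comap (a • (LinearMap.id : M →ₗ[R] M)) (a ^ (e+1) • ⊤) := by
      intro x hx
      obtain ⟨m, hm⟩ := (mem_smulTop_iff _ x).mp hx
      rw [Submodule.mem_comap]
      refine (mem_smulTop_iff _ _).mpr ⟨m, ?_⟩
      rw [LinearMap.smul_apply, LinearMap.id_apply, ← hm, ← mul_smul, ← pow_succ']
    have hle₂ : a ^ (e+1) • (⊤ : Submodule R M) ≤
        Submodule.comap (LinearMap.id : M →ₗ[R] M) (a • ⊤) := by
      intro x hx
      obtain ⟨m, hm⟩ := (mem_smulTop_iff _ x).mp hx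
      rw [Submodule.mem_comap, LinearMap.id_apply]
      refine (mem_smulTop_iff _ _).mpr ⟨a ^ e • m, ?_⟩
      rw [← hm, ← mul_smul, ← pow_succ']
    set g : QuotSMulTop (a ^ e) M →ₗ[R] QuotSMulTop (a ^ (e+1)) M :=
      Submodule.mapQ _ _ (a • LinearMap.id) hle₁ with hgdef
    set f : QuotSMulTop (a ^ (e+1)) M →ₗ[R] QuotSMulTop a M :=
      Submodule.mapQ _ _ LinearMap.id hle₂ with hfdef
    have hg : Function.Injective g := by
      rw [injective_iff_map_eq_zero]
      intro q hq
      obtain ⟨k, rfl⟩ := Submodule.Quotient.mk_surjective _ q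
      rw [hgdef, Submodule.mapQ_apply, Submodule.Quotient.mk_eq_zero] at hq
      obtain ⟨m, hm⟩ := (mem_smulTop_iff _ _).mp hq
      rw [LinearMap.smul_apply, LinearMap.id_apply] at hm
      have h1 : a • (a ^ e • m) = a • k := by
        rw [← mul_smul, ← pow_succ']; exact hm
      have hk : a ^ e • m = k := ha h1
      rw [Submodule.Quotient.mk_eq_zero]
      exact (mem_smulTop_iff _ _).mpr ⟨m, hk⟩
    have hf : Function.Surjective f := by
      intro q
      obtain ⟨m, rfl⟩ := Submodule.Quotient.mk_surjective _ q
      exact ⟨Submodule.Quotient.mk m, by rw [hfdef, Submodule.mapQ_apply, LinearMap.id_apply]⟩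
    have hex : Function.Exact g f := by
      intro q
      obtain ⟨m, rfl⟩ := Submodule.Quotient.mk_surjective _ q
      constructor
      · intro hq
        rw [hfdef, Submodule.mapQ_apply, LinearMap.id_apply, Submodule.Quotient.mk_eq_zero] at hq
        obtain ⟨u, hu⟩ := (mem_smulTop_iff _ _).mp hq
        refine ⟨Submodule.Quotient.mk u, ?_⟩
        rw [hgdef, Submodule.mapQ_apply, LinearMap.smul_apply, LinearMap.id_apply, hu]
      · rintro ⟨k', hk'⟩
        obtain ⟨u, rfl⟩ := Submodule.Quotient.mk_surjective _ k'
        rw [hgdef, Submodule.mapQ_apply, LinearMap.smul_apply, LinearMap.id_apply] at hk'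
        rw [hfdef, Submodule.mapQ_apply, LinearMap.id_apply, Submodule.Quotient.mk_eq_zero]
        have hmem : m - a • u ∈ a ^ (e+1) • (⊤ : Submodule R M) :=
          (Submodule.Quotient.eq _).mp hk'.symm
        obtain ⟨w, hw⟩ := (mem_smulTop_iff _ _).mp hmem
        refine (mem_smulTop_iff _ _).mpr ⟨u + a ^ e • w, ?_⟩
        rw [smul_add, ← mul_smul, ← pow_succ', hw]
        abel
    exact isWeaklyRegular_of_exact l g f hg hf hex ihe h

private lemma isWeaklyRegular_pow {R : Type*} [CommRing R] (e : ℕ) :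
    ∀ (rs : List R) {M : Type*} [AddCommGroup M] [Module R M],
    IsWeaklyRegular M rs → IsWeaklyRegular M (rs.map (· ^ e)) := by
  intro rs
  induction rs with
  | nil => intro M _ _ _; simpa using IsWeaklyRegular.nil (R := R) M
  | cons a rs ih =>
    intro M _ _ h
    rw [isWeaklyRegular_cons_iff] at h
    rw [List.map_cons, isWeaklyRegular_cons_iff]
    exact ⟨h.1.pow e, isWeaklyRegular_quotSMulTop_pow h.1 _ (ih h.2) e⟩


open WittVector TruncatedWittVector

section WittLayer

variable (p : ℕ) [Fact p.Prime] (A : Type) [CommRing A]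

local notation "W" => WittVector p A
local notation "T" m => TruncatedWittVector p m A

private lemma truncate_out' (m : ℕ) (x : TruncatedWittVector p m A) :
    WittVector.truncate m x.out = x :=
  x.truncateFun_out

private lemma right_inv_out (m : ℕ) :
    Function.RightInverse TruncatedWittVector.out (WittVector.truncate (p := p) (R := A) m) :=
  fun x => truncate_out' p A m x

private lemma ghost_vanish (m i : ℕ) (hi : i < m) (x : W)
    (hx : x ∈ RingHom.ker (WittVector.truncate (p := p) (R := A) m)) :
    ghostComponent i x = 0 := by
  rw [WittVector.mem_ker_truncate] at hx
  rw [ghostComponent_apply, aeval_wittPolynomial]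
  refine Finset.sum_eq_zero fun j hj => ?_
  rw [Finset.mem_range] at hj
  rw [hx j (by omega), zero_pow (pow_ne_zero _ (Nat.Prime.ne_zero Fact.out)), mul_zero]

/-- descended ghost component -/
private noncomputable def gw (m i : ℕ) (hi : i < m) : (T m) →+* A :=
  RingHom.liftOfRightInverse (WittVector.truncate m) TruncatedWittVector.out
    (right_inv_out p A m) ⟨WittVector.ghostComponent i, fun x hx => ghost_vanish p A m i hi x hx⟩

private lemma gw_truncate (m i : ℕ) (hi : i < m) (x : W) :
    gw p A m i hi (WittVector.truncate m x) = ghostComponent i x :=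
  RingHom.liftOfRightInverse_comp_apply _ _ (right_inv_out p A m) _ x

private lemma gw_apply (m i : ℕ) (hi : i < m) (x : T m) :
    gw p A m i hi x = ghostComponent i x.out := by
  conv_lhs => rw [← truncate_out' p A m x]
  rw [gw_truncate]

private lemma gw_tei (m i : ℕ) (hi : i < m) (a : A) :
    gw p A m i hi (WittVector.truncate m (teichmuller p a)) = a ^ p ^ i := by
  rw [gw_truncate, ghostComponent_teichmuller]

private lemma ghost_zero_coeff (x : W) : ghostComponent 0 x = x.coeff 0 := by
  rw [ghostComponent_apply, wittPolynomial_zero, MvPolynomial.aeval_X]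

private lemma gw_zero_coeff (m : ℕ) (hm : 0 < m) (x : T m) :
    gw p A m 0 hm x = x.coeff ⟨0, hm⟩ := by
  rw [gw_apply, ghost_zero_coeff]
  exact x.coeff_out ⟨0, hm⟩

private lemma gw_zero_surjective (m : ℕ) (hm : 0 < m) :
    Function.Surjective (gw p A m 0 hm) := fun a =>
  ⟨WittVector.truncate m (teichmuller p a), by
    rw [gw_tei]; simp⟩

/-- vanishing zeroth coefficient means a Verschiebung -/
private lemma exists_versch (x : W) (hx : x.coeff 0 = 0) :
    ∃ u : W, verschiebung u = x := by
  refine ⟨WittVector.mk p (fun j => x.coeff (j + 1)), WittVector.ext fun j => ?_⟩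
  cases j with
  | zero => rw [verschiebung_coeff_zero, hx]
  | succ j => rw [verschiebung_coeff_succ]; rfl

/-- product of two elements with vanishing zeroth coefficient is p times something -/
private lemma sq_lemma (m : ℕ) (hm : 0 < m) (x y : T m)
    (hx : x.coeff ⟨0, hm⟩ = 0) (hy : y.coeff ⟨0, hm⟩ = 0) :
    ∃ z : T m, x * y = (p : T m) * z := by
  obtain ⟨u, hu⟩ := exists_versch p A x.out (by rw [x.coeff_out ⟨0, hm⟩]; exact hx)
  obtain ⟨v, hv⟩ := exists_versch p A y.out (by rw [y.coeff_out ⟨0, hm⟩]; exact hy)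
  refine ⟨WittVector.truncate m (verschiebung (u * v)), ?_⟩
  have key : x.out * y.out = (p : W) * verschiebung (u * v) := by
    rw [← hu, ← hv]
    calc verschiebung u * verschiebung v
        = verschiebung (u * WittVector.frobenius (verschiebung v)) :=
          (verschiebung_mul_frobenius u (verschiebung v)).symm
      _ = verschiebung (u * (v * (p : W))) := by rw [frobenius_verschiebung]
      _ = verschiebung ((p : ℕ) • (u * v)) := by
          rw [nsmul_eq_mul]; ring_nf
      _ = (p : ℕ) • verschiebung (u * v) := by rw [map_nsmul]
      _ = (p : W) * verschiebung (u * v) := by rw [nsmul_eq_mul]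
  calc x * y = WittVector.truncate m x.out * WittVector.truncate m y.out := by
        rw [truncate_out', truncate_out']
    _ = WittVector.truncate m (x.out * y.out) := (map_mul _ _ _).symm
    _ = (p : T m) * WittVector.truncate m (verschiebung (u * v)) := by
        rw [key, map_mul, map_natCast]

private lemma ghost_torsion : ∀ (m : ℕ) (x : W),
    (∀ i ≤ m, ghostComponent i x = 0) → ∀ j ≤ m, ((p ^ m : ℕ) • x).coeff j = 0 := by
  intro m
  induction m with
  | zero =>
    intro x h j hj
    interval_cases j
    rw [pow_zero, one_smul, ← ghost_zero_coeff]
    exact h 0 le_rfl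
  | succ m ih =>
    intro x h j hj
    have hx0 : x.coeff 0 = 0 := by rw [← ghost_zero_coeff]; exact h 0 (by omega)
    obtain ⟨u, hu⟩ := exists_versch p A x hx0
    have hu' : ∀ i ≤ m, ghostComponent i ((p : ℕ) • u) = 0 := by
      intro i hi
      rw [map_nsmul, nsmul_eq_mul]
      have := h (i + 1) (by omega)
      rw [← hu, ghostComponent_verschiebung] at this
      exact this
    have IH := ih ((p : ℕ) • u) hu'
    have hsm : (p ^ (m + 1) : ℕ) • x = verschiebung ((p ^ m : ℕ) • ((p : ℕ) • u)) := by
      rw [← hu, ← map_nsmul, smul_smul, ← pow_succ]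
    rw [hsm]
    cases j with
    | zero => rw [verschiebung_coeff_zero]
    | succ j => rw [verschiebung_coeff_succ]; exact IH j (by omega)

private lemma torsion_T (m : ℕ) (x : T (m+1))
    (h : ∀ i (hi : i < m + 1), gw p A (m+1) i hi x = 0) :
    (p ^ m : ℕ) • x = 0 := by
  have hg : ∀ i ≤ m, ghostComponent i x.out = 0 := by
    intro i hi
    rw [← gw_apply p A (m+1) i (by omega)]
    exact h i (by omega)
  have hc := ghost_torsion p A m x.out hg
  have : WittVector.truncate (m+1) ((p ^ m : ℕ) • x.out) = 0 := by
    rw [← RingHom.mem_ker, WittVector.mem_ker_truncate]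
    intro i hi
    exact hc i (by omega)
  rw [map_nsmul, truncate_out'] at this
  exact this

private lemma prod_mem_prime {R : Type*} [CommRing R] (P : Ideal R) (hP : P.IsPrime)
    {ι : Type*} (s : Finset ι) (f : ι → R) (h : ∏ i ∈ s, f i ∈ P) : ∃ i ∈ s, f i ∈ P := by
  classical
  induction s using Finset.induction_on with
  | empty =>
    rw [Finset.prod_empty] at h
    exact absurd (P.eq_top_iff_one.mpr h) hP.ne_top
  | @insert a s' hx ih =>
    rw [Finset.prod_insert hx] at h
    rcases hP.mem_or_mem h with h' | h'
    · exact ⟨a, Finset.mem_insert_self a s', h'⟩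
    · obtain ⟨i, hi, hfi⟩ := ih h'
      exact ⟨i, Finset.mem_insert_of_mem hi, hfi⟩

private lemma prime_ker (m : ℕ) (P : Ideal (T (m+1))) (hP : P.IsPrime) :
    ∃ i, ∃ hi : i < m + 1, RingHom.ker (gw p A (m+1) i hi) ≤ P := by
  by_cases hp : ((p : ℕ) : T (m+1)) ∈ P
  · refine ⟨0, Nat.succ_pos m, fun x hx => ?_⟩
    rw [RingHom.mem_ker, gw_zero_coeff] at hx
    obtain ⟨z, hz⟩ := sq_lemma p A (m+1) (Nat.succ_pos m) x x hx hx
    have : x * x ∈ P := by rw [hz]; exact P.mul_mem_right z hp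
    exact (hP.mem_or_mem this).elim id id
  · by_contra hcon
    push_neg at hcon
    have hch : ∀ i : Fin (m+1), ∃ x, x ∈ RingHom.ker (gw p A (m+1) i.1 i.2) ∧ x ∉ P := by
      intro i
      have := hcon i.1 i.2
      obtain ⟨x, hx1, hx2⟩ := SetLike.not_le_iff_exists.mp this
      exact ⟨x, hx1, hx2⟩
    choose xs h1 h2 using hch
    set y := ∏ i : Fin (m+1), xs i with hy
    have hyk : ∀ i (hi : i < m + 1), gw p A (m+1) i hi y = 0 := by
      intro i hi
      have hmp : gw p A (m+1) i hi y = ∏ j : Fin (m+1), gw p A (m+1) i hi (xs j) :=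
        map_prod _ _ _
      rw [hmp]
      refine Finset.prod_eq_zero (Finset.mem_univ (⟨i, hi⟩ : Fin (m+1))) ?_
      exact RingHom.mem_ker.mp (h1 ⟨i, hi⟩)
    have hyP : y ∉ P := by
      intro hmem
      obtain ⟨i, _, hi⟩ := prod_mem_prime P hP Finset.univ xs hmem
      exact h2 i hi
    have h0 : (p ^ m : ℕ) • y = 0 := torsion_T p A m y hyk
    have : ((p : ℕ) : T (m+1)) ^ m * y ∈ P := by
      have : ((p ^ m : ℕ) : T (m+1)) * y = 0 := by
        rw [← nsmul_eq_mul]; exact h0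
      rw [Nat.cast_pow] at this
      rw [this]; exact P.zero_mem
    rcases hP.mem_or_mem this with h' | h'
    · exact hp (hP.mem_of_pow_mem m h')
    · exact hyP h'

end WittLayer

section DimLemmas

private lemma krullDim_le_of_integral (R S : Type*) [CommRing R] [CommRing S] [Algebra R S]
    (hinj : Function.Injective (algebraMap R S)) [Algebra.IsIntegral R S] :
    ringKrullDim R ≤ ringKrullDim S := by
  have key : ∀ (k : ℕ) (ℓ : LTSeries (PrimeSpectrum R)), ℓ.length = k →
      ∃ ℓ' : LTSeries (PrimeSpectrum S), ℓ'.length = k ∧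
        ℓ'.last.asIdeal.comap (algebraMap R S) = ℓ.last.asIdeal := by
    intro k
    induction k with
    | zero =>
      intro ℓ _
      haveI := ℓ.last.isPrime
      obtain ⟨Q, _, hQp, hQc⟩ := Ideal.exists_ideal_over_prime_of_isIntegral
        (S := S) ℓ.last.asIdeal ⊥ (by
          intro x hx
          rw [Ideal.mem_comap] at hx
          have hx0 : algebraMap R S x = 0 := by simpa using hx
          have hxx : x = 0 := hinj (by rw [hx0, map_zero])
          rw [hxx]; exact Submodule.zero_mem _)
      exact ⟨RelSeries.singleton _ ⟨Q, hQp⟩, rfl, hQc⟩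
    | succ k ih =>
      intro ℓ hl
      have h0 : ℓ.length ≠ 0 := by omega
      obtain ⟨ℓ'', hlen, hlast⟩ := ih ℓ.eraseLast (by rw [RelSeries.eraseLast_length]; omega)
      have hrel : ℓ.eraseLast.last < ℓ.last := ℓ.eraseLast_last_rel_last h0
      haveI := ℓ.last.isPrime
      obtain ⟨Q, hQI, hQp, hQc⟩ := Ideal.exists_ideal_over_prime_of_isIntegral
        ℓ.last.asIdeal ℓ''.last.asIdeal (by rw [hlast]; exact le_of_lt hrel)
      have hlt : ℓ''.last < ⟨Q, hQp⟩ := by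
        refine lt_of_le_of_ne hQI fun he => ?_
        have : ℓ''.last.asIdeal = Q := congrArg PrimeSpectrum.asIdeal he
        rw [← this, hlast] at hQc
        exact hrel.ne (PrimeSpectrum.ext hQc)
      refine ⟨ℓ''.snoc ⟨Q, hQp⟩ hlt, ?_, ?_⟩
      · rw [RelSeries.snoc_length, hlen]
      · rw [RelSeries.last_snoc]; exact hQc
  show Order.krullDim (PrimeSpectrum R) ≤ Order.krullDim (PrimeSpectrum S)
  unfold Order.krullDim
  refine iSup_le fun ℓ => ?_
  obtain ⟨ℓ', hlen, -⟩ := key ℓ.length ℓ rfl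
  have he : (ℓ.length : WithBot ℕ∞) = (ℓ'.length : WithBot ℕ∞) := by rw [hlen]
  rw [he]
  exact le_iSup (fun (q : LTSeries (PrimeSpectrum S)) => (q.length : WithBot ℕ∞)) ℓ'

private lemma quot_chain_le {R : Type*} [CommRing R] (K : Ideal R)
    (ℓ : LTSeries (PrimeSpectrum R)) (hK : ∀ j, K ≤ (ℓ j).asIdeal) :
    (ℓ.length : WithBot ℕ∞) ≤ ringKrullDim (R ⧸ K) := by
  have hstep : ∀ j : Fin ℓ.length,
      (⟨((ℓ j.castSucc).asIdeal).map (Ideal.Quotient.mk K),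
        Ideal.map_isPrime_of_surjective Ideal.Quotient.mk_surjective
          (by rw [Ideal.mk_ker]; exact hK _)⟩ : PrimeSpectrum (R ⧸ K)) <
      (⟨((ℓ j.succ).asIdeal).map (Ideal.Quotient.mk K),
        Ideal.map_isPrime_of_surjective Ideal.Quotient.mk_surjective
          (by rw [Ideal.mk_ker]; exact hK _)⟩ : PrimeSpectrum (R ⧸ K)) := by
    intro j
    have hlt := ℓ.step j
    rw [← PrimeSpectrum.asIdeal_lt_asIdeal]
    have hlt' : (ℓ j.castSucc).asIdeal < (ℓ j.succ).asIdeal :=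
      (PrimeSpectrum.asIdeal_lt_asIdeal _ _).mpr hlt
    refine lt_of_le_of_ne (Ideal.map_mono (le_of_lt hlt')) fun he => ?_
    have he' : ((ℓ j.castSucc).asIdeal).map (Ideal.Quotient.mk K) =
        ((ℓ j.succ).asIdeal).map (Ideal.Quotient.mk K) := he
    have hc : ∀ jj : Fin (ℓ.length + 1), Ideal.comap (Ideal.Quotient.mk K)
        (((ℓ jj).asIdeal).map (Ideal.Quotient.mk K)) = (ℓ jj).asIdeal := by
      intro jj
      rw [Ideal.comap_map_of_surjective _ Ideal.Quotient.mk_surjective]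
      rw [← RingHom.ker_eq_comap_bot, Ideal.mk_ker]
      exact sup_eq_left.mpr (hK jj)
    have hcc := congrArg (Ideal.comap (Ideal.Quotient.mk K)) he'
    rw [hc j.castSucc, hc j.succ] at hcc
    exact hlt.ne (PrimeSpectrum.ext hcc)
  let ℓ' : LTSeries (PrimeSpectrum (R ⧸ K)) :=
    { length := ℓ.length
      toFun := fun j => ⟨((ℓ j).asIdeal).map (Ideal.Quotient.mk K),
        Ideal.map_isPrime_of_surjective Ideal.Quotient.mk_surjective
          (by rw [Ideal.mk_ker]; exact hK _)⟩
      step := hstep }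
  have h1 : (ℓ'.length : WithBot ℕ∞) ≤ Order.krullDim (PrimeSpectrum (R ⧸ K)) := by
    unfold Order.krullDim
    exact le_iSup (fun (q : LTSeries (PrimeSpectrum (R ⧸ K))) => (q.length : WithBot ℕ∞)) ℓ'
  exact le_trans (le_of_eq rfl) h1

end DimLemmas

section RegLayer

variable (p : ℕ) [Fact p.Prime] (A : Type) [CommRing A]

local notation "W" => WittVector p A
local notation "T" m => TruncatedWittVector p m A

open WittVector TruncatedWittVector RingTheory.Sequence

private lemma iterV_add (k : ℕ) (x y : W) :
    verschiebung^[k] (x + y) = verschiebung^[k] x + verschiebung^[k] y := by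
  induction k with
  | zero => rfl
  | succ k ih => rw [Function.iterate_succ_apply', Function.iterate_succ_apply',
      Function.iterate_succ_apply', ih, map_add]

private lemma iterV_coeff_lt : ∀ (k j : ℕ) (x : W), j < k → (verschiebung^[k] x).coeff j = 0 := by
  intro k
  induction k with
  | zero => intro j x h; omega
  | succ k ih =>
    intro j x h
    rw [Function.iterate_succ_apply']
    cases j with
    | zero => rw [verschiebung_coeff_zero]
    | succ j => rw [verschiebung_coeff_succ]; exact ih j x (by omega)

private lemma iterV_coeff_last (k : ℕ) (x : W) :
    (verschiebung^[k] x).coeff k = x.coeff 0 := by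
  have h := iterate_verschiebung_coeff (p := p) (R := A) x k 0
  rwa [zero_add] at h

private lemma coeff_zero_add (x y : W) : (x + y).coeff 0 = x.coeff 0 + y.coeff 0 := by
  rw [← ghost_zero_coeff, ← ghost_zero_coeff, ← ghost_zero_coeff, map_add]

private lemma coeff_zero_mul (x y : W) : (x * y).coeff 0 = x.coeff 0 * y.coeff 0 := by
  rw [← ghost_zero_coeff, ← ghost_zero_coeff, ← ghost_zero_coeff, map_mul]

private lemma ghost_zero_iterF (k : ℕ) (x : W) :
    ghostComponent 0 (WittVector.frobenius^[k] x) = ghostComponent k x := by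
  induction k generalizing x with
  | zero => rfl
  | succ k ih =>
    rw [Function.iterate_succ_apply, ih, ghostComponent_frobenius]

/-- the additive embedding of `A` as the last piece of truncated Witt vectors -/
private noncomputable def phi (m : ℕ) (a : A) : T (m+2) :=
  WittVector.truncate (m+2) (verschiebung^[m+1] (teichmuller p a))

private lemma truncVk (m : ℕ) (x : W) :
    WittVector.truncate (m+2) (verschiebung^[m+1] x) = phi p A m (x.coeff 0) := by
  apply TruncatedWittVector.ext
  intro i
  rw [phi, WittVector.coeff_truncate, WittVector.coeff_truncate]
  rcases lt_or_ge (i : ℕ) (m+1) with h | h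
  · rw [iterV_coeff_lt p A (m+1) i x h, iterV_coeff_lt p A (m+1) i _ h]
  · have hi : (i : ℕ) = m + 1 := by omega
    have h1 : (verschiebung^[m+1] x).coeff (i : ℕ) = x.coeff 0 := by
      rw [hi, iterV_coeff_last]
    have h2 : (verschiebung^[m+1] (teichmuller p (x.coeff 0))).coeff (i : ℕ) = x.coeff 0 := by
      rw [hi, iterV_coeff_last, teichmuller_coeff_zero]
    rw [h1, h2]

private lemma phi_add (m : ℕ) (a b : A) : phi p A m (a + b) = phi p A m a + phi p A m b := by
  have h1 : phi p A m (a + b) =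
      WittVector.truncate (m+2) (verschiebung^[m+1] (teichmuller p a + teichmuller p b)) := by
    rw [truncVk, coeff_zero_add, teichmuller_coeff_zero, teichmuller_coeff_zero]
  rw [h1, iterV_add, map_add, phi, phi]

private lemma phi_smul (m : ℕ) (hlt : m + 1 < m + 2) (r : T (m+2)) (a : A) :
    r * phi p A m a = phi p A m (gw p A (m+2) (m+1) hlt r * a) := by
  conv_lhs => rw [← truncate_out' p A (m+2) r]
  rw [phi, ← map_mul, mul_comm, iterate_verschiebung_mul_left, truncVk, coeff_zero_mul,
    teichmuller_coeff_zero, ← ghost_zero_coeff, ghost_zero_iterF,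
    ← gw_apply p A (m+2) (m+1) hlt, mul_comm a]

private lemma phi_inj0 (m : ℕ) (a : A) (h : phi p A m a = 0) : a = 0 := by
  have h1 : (phi p A m a).coeff ⟨m+1, by omega⟩ = a := by
    rw [phi, WittVector.coeff_truncate]
    show (verschiebung^[m+1] (teichmuller p a)).coeff (m+1) = a
    rw [iterV_coeff_last, teichmuller_coeff_zero]
  rw [h] at h1
  rw [← h1, TruncatedWittVector.coeff_zero]

private lemma trunc_phi (m : ℕ) (hm : m + 1 ≤ m + 2) (a : A) :
    TruncatedWittVector.truncate hm (phi p A m a) = 0 := by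
  rw [phi, truncate_wittVector_truncate]
  rw [← RingHom.mem_ker, WittVector.mem_ker_truncate]
  intro i hi
  exact iterV_coeff_lt p A (m+1) i _ hi

private lemma exists_phi (m : ℕ) (hm : m + 1 ≤ m + 2) (x : T (m+2))
    (hx : TruncatedWittVector.truncate hm x = 0) :
    phi p A m (x.coeff ⟨m+1, by omega⟩) = x := by
  have hc : ∀ i : Fin (m+1), x.coeff (Fin.castLE hm i) = 0 := by
    intro i
    rw [← TruncatedWittVector.coeff_truncate hm i x, hx, TruncatedWittVector.coeff_zero]
  apply TruncatedWittVector.ext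
  intro i
  rcases lt_or_ge (i : ℕ) (m+1) with h | h
  · have h1 : (phi p A m (x.coeff ⟨m+1, by omega⟩)).coeff i = 0 := by
      rw [phi, WittVector.coeff_truncate]
      exact iterV_coeff_lt p A (m+1) i _ h
    have h2 : x.coeff i = 0 := by
      rw [show i = Fin.castLE hm ⟨(i : ℕ), h⟩ from Fin.ext rfl]
      exact hc _
    rw [h1, h2]
  · have hieq : i = (⟨m+1, by omega⟩ : Fin (m+2)) :=
      Fin.ext (by show (i : ℕ) = m + 1; have := i.isLt; omega)
    have h1 : (phi p A m (x.coeff ⟨m+1, by omega⟩)).coeff i = x.coeff ⟨m+1, by omega⟩ := by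
      rw [phi, WittVector.coeff_truncate]
      have hv : ((i : Fin (m+2)) : ℕ) = m + 1 := by have := i.isLt; omega
      rw [hv, iterV_coeff_last, teichmuller_coeff_zero]
    rw [h1, hieq]

private lemma teich_wr (rs : List A) (hA : IsWeaklyRegular A rs) :
    ∀ m : ℕ, IsWeaklyRegular (T (m+1))
      (rs.map (fun a => WittVector.truncate (m+1) (teichmuller p a))) := by
  intro m
  induction m with
  | zero =>
    have hinj : Function.Injective (gw p A 1 0 one_pos) := by
      intro x y hxy
      rw [gw_zero_coeff, gw_zero_coeff] at hxy
      apply TruncatedWittVector.ext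
      intro i
      have : i = (⟨0, one_pos⟩ : Fin 1) := Subsingleton.elim _ _
      rw [this]; exact hxy
    let e : (T 1) ≃+* A := RingEquiv.ofBijective (gw p A 1 0 one_pos)
      ⟨hinj, gw_zero_surjective p A 1 one_pos⟩
    refine (AddEquiv.isWeaklyRegular_congr (e := e.toAddEquiv) ?_).mpr hA
    refine List.forall₂_map_left_iff.mpr (List.forall₂_same.mpr fun a _ x => ?_)
    show e ((WittVector.truncate 1 (teichmuller p a)) * x) = a * e x
    rw [map_mul]
    have he : e (WittVector.truncate 1 (teichmuller p a)) = a := by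
      show gw p A 1 0 one_pos (WittVector.truncate 1 (teichmuller p a)) = a
      rw [gw_tei, pow_zero, pow_one]
    rw [he]
  | succ m ih =>
    have hlt : m + 1 < m + 2 := by omega
    have hm : m + 1 ≤ m + 2 := by omega
    let tr : (T (m+2)) →+* T (m+1) := TruncatedWittVector.truncate hm
    letI modN : Module (T (m+2)) (T (m+1)) := tr.toModule
    letI modK : Module (T (m+2)) A := (gw p A (m+2) (m+1) hlt).toModule
    let f : (T (m+2)) →ₗ[T (m+2)] T (m+1) :=
      { toFun := tr
        map_add' := fun x y => map_add tr x y
        map_smul' := fun r x => map_mul tr r x }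
    let g : A →ₗ[T (m+2)] T (m+2) :=
      { toFun := phi p A m
        map_add' := phi_add p A m
        map_smul' := fun r a => (phi_smul p A m hlt r a).symm }
    have hg : Function.Injective g := by
      rw [injective_iff_map_eq_zero]
      exact fun a ha => phi_inj0 p A m a ha
    have hf : Function.Surjective f := TruncatedWittVector.truncate_surjective hm
    have hex : Function.Exact g f := by
      intro x
      constructor
      · intro hx
        exact ⟨x.coeff ⟨m+1, by omega⟩, exists_phi p A m hm x hx⟩
      · rintro ⟨a, rfl⟩
        exact trunc_phi p A m hm a
    have hK : IsWeaklyRegular A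
        (rs.map (fun a => WittVector.truncate (m+2) (teichmuller p a))) := by
      have hbase := isWeaklyRegular_pow (p ^ (m+1)) rs hA
      refine (AddEquiv.isWeaklyRegular_congr (e := AddEquiv.refl A) ?_).mpr hbase
      refine List.forall₂_map_left_iff.mpr (List.forall₂_map_right_iff.mpr
        (List.forall₂_same.mpr fun a _ x => ?_))
      show gw p A (m+2) (m+1) hlt (WittVector.truncate (m+2) (teichmuller p a)) * x
          = a ^ p ^ (m+1) * x
      rw [gw_tei]
    have hN : IsWeaklyRegular (T (m+1))
        (rs.map (fun a => WittVector.truncate (m+2) (teichmuller p a))) := by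
      refine (AddEquiv.isWeaklyRegular_congr (e := AddEquiv.refl (T (m+1))) ?_).mpr ih
      refine List.forall₂_map_left_iff.mpr (List.forall₂_map_right_iff.mpr
        (List.forall₂_same.mpr fun a _ x => ?_))
      show tr (WittVector.truncate (m+2) (teichmuller p a)) * x
          = (WittVector.truncate (m+1) (teichmuller p a)) * x
      rw [truncate_wittVector_truncate]
    exact isWeaklyRegular_of_exact _ g f hg hf hex hK hN

end RegLayer

/-- Let `A` be a local ring with `p` in its maximal ideal, such that both
`A` and `W_n(A)` are noetherian. If `A` is Cohen–Macaulay, then `W_n(A)` is Cohen–Macaulay.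
(Normalized indexing: `W_n = TruncatedWittVector p (n+1)`; `W_n(A)` is local with maximal
ideal `gh_0⁻¹(𝔪_A)`.) -/
theorem witt_of_cohen_macaulay (p : ℕ) [Fact p.Prime] (n : ℕ)
    (A : Type) [CommRing A] [IsLocalRing A] [IsNoetherianRing A]
    (hp : (p : A) ∈ IsLocalRing.maximalIdeal A)
    [IsNoetherianRing (TruncatedWittVector p (n + 1) A)]
    (hCM : IsCohenMacaulayLocalRing A) :
    IsCohenMacaulayLocalRing (TruncatedWittVector p (n + 1) A) := by
  classical
  obtain ⟨rs, hnon, hreg, hlen⟩ := hCM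
  have hps : 0 < n + 1 := Nat.succ_pos n
  -- dimension inequalities
  have hd1 : ringKrullDim A ≤ ringKrullDim (TruncatedWittVector p (n+1) A) :=
    ringKrullDim_le_of_surjective (gw p A (n+1) 0 hps) (gw_zero_surjective p A (n+1) hps)
  have hd2 : ringKrullDim (TruncatedWittVector p (n+1) A) ≤ ringKrullDim A := by
    show Order.krullDim (PrimeSpectrum (TruncatedWittVector p (n+1) A)) ≤ _
    unfold Order.krullDim
    refine iSup_le fun ℓ => ?_
    obtain ⟨i, hi, hker⟩ := prime_ker p A n (ℓ.head).asIdeal (ℓ.head).isPrime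
    have hKall : ∀ j, RingHom.ker (gw p A (n+1) i hi) ≤ (ℓ j).asIdeal := fun j =>
      le_trans hker ((PrimeSpectrum.asIdeal_le_asIdeal _ _).mpr (ℓ.monotone (Fin.zero_le j)))
    refine le_trans (quot_chain_le _ ℓ hKall) ?_
    set Q := TruncatedWittVector p (n+1) A ⧸ RingHom.ker (gw p A (n+1) i hi) with hQ
    letI : Algebra Q A := (RingHom.kerLift (gw p A (n+1) i hi)).toAlgebra
    have hinj : Function.Injective (algebraMap Q A) :=
      RingHom.kerLift_injective (gw p A (n+1) i hi)
    haveI : Algebra.IsIntegral Q A := by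
      constructor
      intro a
      refine ⟨Polynomial.X ^ (p ^ i) - Polynomial.C
        (Ideal.Quotient.mk _ (WittVector.truncate (n+1) (teichmuller p a))), ?_, ?_⟩
      · exact Polynomial.monic_X_pow_sub_C _
          (pow_ne_zero _ (Nat.Prime.ne_zero Fact.out))
      · rw [Polynomial.eval₂_sub, Polynomial.eval₂_pow, Polynomial.eval₂_X,
          Polynomial.eval₂_C]
        have : algebraMap Q A (Ideal.Quotient.mk _
            (WittVector.truncate (n+1) (teichmuller p a))) = a ^ p ^ i := by
          show RingHom.kerLift (gw p A (n+1) i hi) (Ideal.Quotient.mk _ _) = _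
          rw [RingHom.kerLift_mk, gw_tei]
        rw [this, sub_self]
    exact krullDim_le_of_integral Q A hinj
  have hdim : ringKrullDim (TruncatedWittVector p (n+1) A) = ringKrullDim A :=
    le_antisymm hd2 hd1
  refine ⟨rs.map (fun a => WittVector.truncate (n+1) (teichmuller p a)), ?_, ?_, ?_⟩
  · -- nonunits
    intro x hx
    rw [List.mem_map] at hx
    obtain ⟨a, ha, rfl⟩ := hx
    rw [mem_nonunits_iff]
    intro hu
    have h1 := hu.map (gw p A (n+1) 0 hps)
    rw [gw_tei, pow_zero, pow_one] at h1
    exact (mem_nonunits_iff.mp (hnon a ha)) h1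
  · refine ⟨teich_wr p A rs hreg.toIsWeaklyRegular n, ?_⟩
    intro htop
    have h1 : (1 : TruncatedWittVector p (n+1) A) ∈
        Ideal.ofList (rs.map (fun a => WittVector.truncate (n+1) (teichmuller p a))) •
          (⊤ : Submodule (TruncatedWittVector p (n+1) A) (TruncatedWittVector p (n+1) A)) :=
      htop ▸ Submodule.mem_top
    have hgen : ∀ r ∈ Ideal.ofList
        (rs.map (fun a => WittVector.truncate (n+1) (teichmuller p a))),
        gw p A (n+1) 0 hps r ∈ IsLocalRing.maximalIdeal A := by
      intro r hr
      have hle : Ideal.ofList (rs.map (fun a => WittVector.truncate (n+1) (teichmuller p a))) ≤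
          Ideal.comap (gw p A (n+1) 0 hps) (IsLocalRing.maximalIdeal A) := by
        rw [Ideal.span_le]
        rintro x hxx
        rw [Set.mem_setOf_eq, List.mem_map] at hxx
        obtain ⟨a, ha, rfl⟩ := hxx
        rw [SetLike.mem_coe, Ideal.mem_comap, gw_tei, pow_zero, pow_one]
        exact (IsLocalRing.mem_maximalIdeal a).mpr (hnon a ha)
      exact hle hr
    have hsub : Ideal.ofList (rs.map (fun a => WittVector.truncate (n+1) (teichmuller p a))) •
        (⊤ : Submodule (TruncatedWittVector p (n+1) A) (TruncatedWittVector p (n+1) A)) ≤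
        Ideal.comap (gw p A (n+1) 0 hps) (IsLocalRing.maximalIdeal A) := by
      refine Submodule.smul_le.mpr fun r hr x _ => ?_
      rw [smul_eq_mul, Ideal.mem_comap, map_mul]
      exact Ideal.mul_mem_right _ _ (hgen r hr)
    have h2 := hsub h1
    rw [Ideal.mem_comap, map_one] at h2
    exact (mem_nonunits_iff.mp ((IsLocalRing.mem_maximalIdeal 1).mp h2)) isUnit_one
  · rw [List.length_map, hlen, hdim]
end
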